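/- Completeness of refinement with respect to implementation-set inclusion: for any two locally consistent specifications S and T over the same alphabet (Act^S = Act^T with the same partition into inputs and outputs), S ≤ T if and only if mod(S) ⊆ mod(T). -/

import Mathlib

open scoped NNReal

/-- A (raw) Timed I/O Transition System over an ambient action type `Act`
and state type `Q`.  The actual sets of input and output actions are the
fields `inputs` and `outputs`; `actTrans` is the action-labelled part of
the transition relation and `delayTrans` the delay-labelled part. -/
structure TIOTS (Act : Type) (Q : Type) where
  init : Q
  inputs : Set Act
  outputs : Set Act
  actTrans : Q → Act → Q → Prop
  delayTrans : Q → ℝ≥0 → Q → Prop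

namespace TIOTS

variable {Act Q Q1 Q2 Q3 : Type}

/-- The alphabet (action set) of a TIOTS. -/
def acts (S : TIOTS Act Q) : Set Act := S.inputs ∪ S.outputs

/-- The axioms of Timed I/O Transition Systems: inputs and outputs are
disjoint, action transitions are labelled by actions of the alphabet,
determinism (for actions and delays), time reflexivity and time additivity. -/
def IsTIOTS (S : TIOTS Act Q) : Prop :=
  Disjoint S.inputs S.outputs ∧
  (∀ q a q', S.actTrans q a q' → a ∈ S.acts) ∧
  (∀ q a q' q'', S.actTrans q a q' → S.actTrans q a q'' → q' = q'') ∧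
  (∀ q (d : ℝ≥0) q' q'', S.delayTrans q d q' → S.delayTrans q d q'' → q' = q'') ∧
  (∀ q, S.delayTrans q 0 q) ∧
  (∀ q q'' (d₁ d₂ : ℝ≥0),
    S.delayTrans q (d₁ + d₂) q'' ↔ ∃ q', S.delayTrans q d₁ q' ∧ S.delayTrans q' d₂ q'')

/-- Input-enabledness: every state accepts every input of the alphabet. -/
def InputEnabled (S : TIOTS Act Q) : Prop :=
  ∀ q, ∀ a ∈ S.inputs, ∃ q', S.actTrans q a q'

/-- A specification is an input-enabled TIOTS. -/
def IsSpecification (S : TIOTS Act Q) : Prop :=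
  S.IsTIOTS ∧ S.InputEnabled

/-- A state allows independent progress if it can delay forever, or can
delay until an output is enabled. -/
def IndependentProgress (S : TIOTS Act Q) (q : Q) : Prop :=
  (∀ d : ℝ≥0, ∃ q', S.delayTrans q d q') ∨
  (∃ (d : ℝ≥0) (q' : Q), ∃ o ∈ S.outputs,
    S.delayTrans q d q' ∧ ∃ q'', S.actTrans q' o q'')

/-- Output urgency of a state: if an output is enabled, no positive delay is. -/
def OutputUrgent (S : TIOTS Act Q) (q : Q) : Prop :=
  ∀ o ∈ S.outputs, ∀ (q' : Q) (d : ℝ≥0) (q'' : Q),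
    S.actTrans q o q' → S.delayTrans q d q'' → d = 0

/-- An implementation is a specification all of whose states are
output urgent and allow independent progress. -/
def IsImplementation (P : TIOTS Act Q) : Prop :=
  P.IsSpecification ∧ ∀ q, P.OutputUrgent q ∧ P.IndependentProgress q

/-- A locally consistent specification: every state allows independent progress. -/
def LocallyConsistent (S : TIOTS Act Q) : Prop :=
  S.IsSpecification ∧ ∀ q, S.IndependentProgress q

/-- Refinement `S ≤ T` (including the side conditions on the alphabets). -/
def Refines (S : TIOTS Act Q1) (T : TIOTS Act Q2) : Prop :=
  Disjoint S.inputs T.outputs ∧ Disjoint S.outputs T.inputs ∧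
  S.inputs ⊆ T.inputs ∧ T.outputs ⊆ S.outputs ∧
  ∃ R : Q1 → Q2 → Prop,
    R S.init T.init ∧
    ∀ s t, R s t →
      (∀ a ∈ T.inputs ∩ S.inputs, ∀ t', T.actTrans t a t' →
        ∃ s', S.actTrans s a s' ∧ R s' t') ∧
      (∀ a ∈ T.inputs \ S.inputs, ∀ t', T.actTrans t a t' → R s t') ∧
      (∀ a ∈ S.outputs ∩ T.outputs, ∀ s', S.actTrans s a s' →
        ∃ t', T.actTrans t a t' ∧ R s' t') ∧
      (∀ a ∈ S.outputs \ T.outputs, ∀ s', S.actTrans s a s' → R s' t) ∧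
      (∀ (d : ℝ≥0) (s' : Q1), S.delayTrans s d s' →
        ∃ t', T.delayTrans t d t' ∧ R s' t')

/-- `Mod S P` : `P` belongs to `mod(S)`, i.e. `P` is an implementation over
the alphabet of `S` satisfying (refining) `S`. -/
def Mod (S : TIOTS Act Q1) (P : TIOTS Act Q2) : Prop :=
  P.IsImplementation ∧ P.inputs = S.inputs ∧ P.outputs = S.outputs ∧ P.Refines S

/-- The TIOTS obtained from `S` by replacing the initial state by `q`. -/
def withInit (S : TIOTS Act Q) (q : Q) : TIOTS Act Q := { S with init := q }

/-- Reachability by finite sequences of action and delay transitions. -/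
inductive Reach (S : TIOTS Act Q) : Q → Q → Prop where
  | refl (q : Q) : Reach S q q
  | act {q q' q'' : Q} (a : Act) : S.actTrans q a q' → Reach S q' q'' → Reach S q q''
  | delay {q q' q'' : Q} (d : ℝ≥0) : S.delayTrans q d q' → Reach S q' q'' → Reach S q q''

/-- The set of error states relative to a set `X`. -/
def errSet (S : TIOTS Act Q) (X : Set Q) : Set Q :=
  { q | (∃ d : ℝ≥0, ¬ ∃ q', S.delayTrans q d q') ∧
        ∀ (d : ℝ≥0), ∀ o ∈ S.outputs, ∀ q', S.delayTrans q d q' →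
          ((¬ ∃ q'', S.actTrans q' o q'') ∨ ∀ q'', S.actTrans q' o q'' → q'' ∈ X) }

/-- The operator `Θ` whose greatest fixpoint is the set of consistent states. -/
def Theta (S : TIOTS Act Q) (X : Set Q) : Set Q :=
  (Set.univ \ S.errSet (Set.univ \ X)) ∩
  { q | ∀ d : ℝ≥0,
      (∀ q', S.delayTrans q d q' →
        (q' ∈ X ∧ ∀ i ∈ S.inputs, ∃ q'', q'' ∈ X ∧ S.actTrans q' i q'')) ∨
      (∃ d' : ℝ≥0, d' ≤ d ∧ ∃ q' q'', q' ∈ X ∧ q'' ∈ X ∧ ∃ o ∈ S.outputs,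
        S.delayTrans q d' q' ∧ S.actTrans q' o q'' ∧
        ∀ i ∈ S.inputs, ∃ q''', q''' ∈ X ∧ S.actTrans q' i q''') }

/-- The set of consistent states: the greatest fixpoint of the monotone
operator `Θ`, given by Knaster–Tarski as the union of all postfixed points. -/
def consSet (S : TIOTS Act Q) : Set Q := ⋃₀ { X | X ⊆ S.Theta X }

/-- Adversarial pruning `S^Δ`: restrict the states to the consistent ones and
restrict the transition relation accordingly. -/
def prune (S : TIOTS Act Q) (h : S.init ∈ S.consSet) :
    TIOTS Act {q : Q // q ∈ S.consSet} where
  init := ⟨S.init, h⟩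
  inputs := S.inputs
  outputs := S.outputs
  actTrans := fun q a q' => S.actTrans q.1 a q'.1
  delayTrans := fun q d q' => S.delayTrans q.1 d q'.1

/-- Conjunction of TIOTSs. -/
def conj (S : TIOTS Act Q1) (T : TIOTS Act Q2) : TIOTS Act (Q1 × Q2) where
  init := (S.init, T.init)
  inputs := S.inputs ∪ T.inputs
  outputs := S.outputs ∪ T.outputs
  actTrans := fun q a q' =>
    (a ∈ S.acts ∩ T.acts ∧ S.actTrans q.1 a q'.1 ∧ T.actTrans q.2 a q'.2) ∨
    (a ∈ S.acts \ T.acts ∧ S.actTrans q.1 a q'.1 ∧ q'.2 = q.2) ∨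
    (a ∈ T.acts \ S.acts ∧ T.actTrans q.2 a q'.2 ∧ q'.1 = q.1)
  delayTrans := fun q d q' => S.delayTrans q.1 d q'.1 ∧ T.delayTrans q.2 d q'.2

/-- Parallel composition of TIOTSs. -/
def par (S : TIOTS Act Q1) (T : TIOTS Act Q2) : TIOTS Act (Q1 × Q2) where
  init := (S.init, T.init)
  inputs := (S.inputs \ T.outputs) ∪ (T.inputs \ S.outputs)
  outputs := S.outputs ∪ T.outputs
  actTrans := fun q a q' =>
    (a ∈ S.acts ∩ T.acts ∧ S.actTrans q.1 a q'.1 ∧ T.actTrans q.2 a q'.2) ∨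
    (a ∈ S.acts \ T.acts ∧ S.actTrans q.1 a q'.1 ∧ q'.2 = q.2) ∨
    (a ∈ T.acts \ S.acts ∧ T.actTrans q.2 a q'.2 ∧ q'.1 = q.1)
  delayTrans := fun q d q' => S.delayTrans q.1 d q'.1 ∧ T.delayTrans q.2 d q'.2

/-- States of the quotient: pairs of states, a universal state and an error state. -/
inductive QSt (Q1 Q2 : Type) where
  | st : Q1 → Q2 → QSt Q1 Q2
  | univ : QSt Q1 Q2
  | err : QSt Q1 Q2

/-- Action transitions of the quotient `T \\ S`. -/
def quotAct (T : TIOTS Act Q1) (S : TIOTS Act Q2) :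
    QSt Q1 Q2 → Act → QSt Q1 Q2 → Prop
  | QSt.st qT qS, a, QSt.st qT' qS' =>
      (a ∈ S.acts ∩ T.acts ∧ T.actTrans qT a qT' ∧ S.actTrans qS a qS') ∨
      (a ∈ S.acts \ T.acts ∧ S.actTrans qS a qS' ∧ qT' = qT) ∨
      (a ∈ T.acts \ S.acts ∧ T.actTrans qT a qT' ∧ qS' = qS)
  | QSt.st _ qS, a, QSt.univ => a ∈ S.outputs ∧ ¬ ∃ qS', S.actTrans qS a qS'
  | QSt.st qT qS, a, QSt.err =>
      a ∈ S.outputs ∩ T.outputs ∧ (¬ ∃ qT', T.actTrans qT a qT') ∧ ∃ qS', S.actTrans qS a qS'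
  | QSt.univ, a, QSt.univ =>
      a ∈ (T.inputs ∪ S.outputs) ∪ ((T.outputs \ S.outputs) ∪ (S.inputs \ T.inputs))
  | QSt.err, a, QSt.err => a ∈ T.inputs ∪ S.outputs
  | _, _, _ => False

/-- Delay transitions of the quotient `T \\ S`. -/
def quotDelay (T : TIOTS Act Q1) (S : TIOTS Act Q2) :
    QSt Q1 Q2 → ℝ≥0 → QSt Q1 Q2 → Prop
  | QSt.st qT qS, d, QSt.st qT' qS' => T.delayTrans qT d qT' ∧ S.delayTrans qS d qS'
  | QSt.st _ qS, d, QSt.univ => ¬ ∃ qS', S.delayTrans qS d qS'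
  | QSt.univ, _, QSt.univ => True
  | _, _, _ => False

/-- The quotient `T \\ S`. -/
def quot (T : TIOTS Act Q1) (S : TIOTS Act Q2) : TIOTS Act (QSt Q1 Q2) where
  init := QSt.st T.init S.init
  inputs := T.inputs ∪ S.outputs
  outputs := (T.outputs \ S.outputs) ∪ (S.inputs \ T.inputs)
  actTrans := T.quotAct S
  delayTrans := T.quotDelay S

end TIOTS

/-- Clock guards: Boolean formulas over atomic clock constraints `x ≺ n`. -/
inductive ClockGuard (C : Type) where
  | tt : ClockGuard C
  | ff : ClockGuard C
  | lt : C → ℕ → ClockGuard C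
  | le : C → ℕ → ClockGuard C
  | gt : C → ℕ → ClockGuard C
  | ge : C → ℕ → ClockGuard C
  | eq : C → ℕ → ClockGuard C
  | and : ClockGuard C → ClockGuard C → ClockGuard C
  | or : ClockGuard C → ClockGuard C → ClockGuard C
  | not : ClockGuard C → ClockGuard C

namespace ClockGuard

variable {C C' : Type}

/-- Satisfaction of a clock guard by a clock valuation. -/
def sat (v : C → ℝ≥0) : ClockGuard C → Prop
  | tt => True
  | ff => False
  | lt x n => v x < (n : ℝ≥0)
  | le x n => v x ≤ (n : ℝ≥0)
  | gt x n => (n : ℝ≥0) < v x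
  | ge x n => (n : ℝ≥0) ≤ v x
  | eq x n => v x = (n : ℝ≥0)
  | and g₁ g₂ => sat v g₁ ∧ sat v g₂
  | or g₁ g₂ => sat v g₁ ∨ sat v g₂
  | not g => ¬ sat v g

/-- Renaming of the clocks of a guard. -/
def map (f : C → C') : ClockGuard C → ClockGuard C'
  | tt => tt
  | ff => ff
  | lt x n => lt (f x) n
  | le x n => le (f x) n
  | gt x n => gt (f x) n
  | ge x n => ge (f x) n
  | eq x n => eq (f x) n
  | and g₁ g₂ => and (map f g₁) (map f g₂)
  | or g₁ g₂ => or (map f g₁) (map f g₂)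
  | not g => not (map f g)

end ClockGuard

/-- A Timed I/O Automaton over action type `Act`, location type `L`
and clock type `C`. -/
structure TIOA (Act L C : Type) where
  init : L
  inputs : Set Act
  outputs : Set Act
  edges : Set (L × Act × ClockGuard C × Set C × L)
  inv : L → ClockGuard C

namespace TIOA

variable {Act L C L1 L2 C1 C2 : Type}

/-- The alphabet (action set) of a TIOA. -/
def acts (A : TIOA Act L C) : Set Act := A.inputs ∪ A.outputs

open Classical in
/-- Reset the clocks in `c` to zero. -/
noncomputable def resetVal (v : C → ℝ≥0) (c : Set C) : C → ℝ≥0 :=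
  fun x => if x ∈ c then 0 else v x

/-- The semantics of a TIOA as a TIOTS. -/
noncomputable def sem (A : TIOA Act L C) : TIOTS Act (L × (C → ℝ≥0)) where
  init := (A.init, fun _ => 0)
  inputs := A.inputs
  outputs := A.outputs
  actTrans := fun q a q' =>
    ∃ g c, (q.1, a, g, c, q'.1) ∈ A.edges ∧ ClockGuard.sat q.2 g ∧
      q'.2 = resetVal q.2 c ∧ ClockGuard.sat q'.2 (A.inv q'.1)
  delayTrans := fun q d q' =>
    q'.1 = q.1 ∧ q'.2 = (fun x => q.2 x + d) ∧
    ClockGuard.sat q'.2 (A.inv q.1) ∧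
    ∀ d' : ℝ≥0, d' < d → ClockGuard.sat (fun x => q.2 x + d') (A.inv q.1)

/-- Conjunction of TIOAs (with disjoint clock sets, realized as a sum type). -/
def conjA (A : TIOA Act L1 C1) (B : TIOA Act L2 C2) :
    TIOA Act (L1 × L2) (C1 ⊕ C2) where
  init := (A.init, B.init)
  inputs := A.inputs ∪ B.inputs
  outputs := A.outputs ∪ B.outputs
  edges := { e |
    (∃ l1 l2 a g1 g2 c1 c2 l1' l2',
      e = ((l1, l2), a,
            ClockGuard.and (ClockGuard.map Sum.inl g1) (ClockGuard.map Sum.inr g2),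
            Sum.inl '' c1 ∪ Sum.inr '' c2, (l1', l2')) ∧
      a ∈ A.acts ∩ B.acts ∧ (l1, a, g1, c1, l1') ∈ A.edges ∧ (l2, a, g2, c2, l2') ∈ B.edges) ∨
    (∃ l1 l2 a g1 c1 l1',
      e = ((l1, l2), a, ClockGuard.map Sum.inl g1, Sum.inl '' c1, (l1', l2)) ∧
      a ∈ A.acts \ B.acts ∧ (l1, a, g1, c1, l1') ∈ A.edges) ∨
    (∃ l1 l2 a g2 c2 l2',
      e = ((l1, l2), a, ClockGuard.map Sum.inr g2, Sum.inr '' c2, (l1, l2')) ∧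
      a ∈ B.acts \ A.acts ∧ (l2, a, g2, c2, l2') ∈ B.edges) }
  inv := fun l =>
    ClockGuard.and (ClockGuard.map Sum.inl (A.inv l.1)) (ClockGuard.map Sum.inr (B.inv l.2))

/-- Parallel composition of TIOAs (with disjoint clock sets). -/
def parA (A : TIOA Act L1 C1) (B : TIOA Act L2 C2) :
    TIOA Act (L1 × L2) (C1 ⊕ C2) where
  init := (A.init, B.init)
  inputs := (A.inputs \ B.outputs) ∪ (B.inputs \ A.outputs)
  outputs := A.outputs ∪ B.outputs
  edges := { e |
    (∃ l1 l2 a g1 g2 c1 c2 l1' l2',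
      e = ((l1, l2), a,
            ClockGuard.and (ClockGuard.map Sum.inl g1) (ClockGuard.map Sum.inr g2),
            Sum.inl '' c1 ∪ Sum.inr '' c2, (l1', l2')) ∧
      a ∈ A.acts ∩ B.acts ∧ (l1, a, g1, c1, l1') ∈ A.edges ∧ (l2, a, g2, c2, l2') ∈ B.edges) ∨
    (∃ l1 l2 a g1 c1 l1',
      e = ((l1, l2), a, ClockGuard.map Sum.inl g1, Sum.inl '' c1, (l1', l2)) ∧
      a ∈ A.acts \ B.acts ∧ (l1, a, g1, c1, l1') ∈ A.edges) ∨
    (∃ l1 l2 a g2 c2 l2',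
      e = ((l1, l2), a, ClockGuard.map Sum.inr g2, Sum.inr '' c2, (l1, l2')) ∧
      a ∈ B.acts \ A.acts ∧ (l2, a, g2, c2, l2') ∈ B.edges) }
  inv := fun l =>
    ClockGuard.and (ClockGuard.map Sum.inl (A.inv l.1)) (ClockGuard.map Sum.inr (B.inv l.2))

/-- The canonical bijection between the states of `⟦A¹ ∧ A²⟧` (resp. `⟦A¹ ∥ A²⟧`)
and the states of `⟦A¹⟧ ∧ ⟦A²⟧` (resp. `⟦A¹⟧ ∥ ⟦A²⟧`):
`((l¹,l²), v) ↦ ((l¹, v∘inl), (l², v∘inr))`. -/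
def stateMap {L1 L2 C1 C2 : Type} (q : (L1 × L2) × ((C1 ⊕ C2) → ℝ≥0)) :
    (L1 × (C1 → ℝ≥0)) × (L2 × (C2 → ℝ≥0)) :=
  ((q.1.1, fun x => q.2 (Sum.inl x)), (q.1.2, fun x => q.2 (Sum.inr x)))

end TIOA

namespace TIOTS

variable {Act Q1 Q2 QP : Type}

lemma withInit_self (S : TIOTS Act Q1) : S.withInit S.init = S := rfl

section Basics

variable {S : TIOTS Act Q1}

lemma lc_disj (hS : S.LocallyConsistent) : Disjoint S.inputs S.outputs := hS.1.1.1
lemma lc_adet (hS : S.LocallyConsistent) : ∀ q a q' q'', S.actTrans q a q' → S.actTrans q a q'' → q' = q'' :=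
  hS.1.1.2.2.1
lemma lc_ddet (hS : S.LocallyConsistent) : ∀ q (d : ℝ≥0) q' q'', S.delayTrans q d q' → S.delayTrans q d q'' → q' = q'' :=
  hS.1.1.2.2.2.1
lemma lc_refl (hS : S.LocallyConsistent) : ∀ q, S.delayTrans q 0 q := hS.1.1.2.2.2.2.1
lemma lc_add (hS : S.LocallyConsistent) : ∀ q q'' (d₁ d₂ : ℝ≥0),
    S.delayTrans q (d₁ + d₂) q'' ↔ ∃ q', S.delayTrans q d₁ q' ∧ S.delayTrans q' d₂ q'' :=
  hS.1.1.2.2.2.2.2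
lemma lc_ie (hS : S.LocallyConsistent) : ∀ q, ∀ a ∈ S.inputs, ∃ q', S.actTrans q a q' := hS.1.2

/-- split a delay at an intermediate time -/
lemma delay_split (hS : S.LocallyConsistent) {q x y : Q1} {e δ : ℝ≥0}
    (hx : S.delayTrans q e x) (hy : S.delayTrans q (e + δ) y) :
    S.delayTrans x δ y := by
  rcases (lc_add hS q y e δ).1 hy with ⟨m, hm1, hm2⟩
  rwa [lc_ddet hS q e x m hx hm1]

lemma delay_of_le (hS : S.LocallyConsistent) {q y : Q1} {e₁ e₂ : ℝ≥0} (hy : S.delayTrans q e₂ y) (h : e₁ ≤ e₂) :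
    ∃ x, S.delayTrans q e₁ x := by
  rw [← add_tsub_cancel_of_le h] at hy
  rcases (lc_add hS q y e₁ (e₂ - e₁)).1 hy with ⟨m, hm1, _⟩
  exact ⟨m, hm1⟩

end Basics

/-- The trivial one-state implementation over the alphabet of `S`. -/
def unitM (S : TIOTS Act Q1) : TIOTS Act PUnit where
  init := PUnit.unit
  inputs := S.inputs
  outputs := S.outputs
  actTrans := fun _ a _ => a ∈ S.inputs
  delayTrans := fun _ _ _ => True

lemma unitM_impl {S : TIOTS Act Q1} (hS : S.LocallyConsistent) :
    (unitM S).IsImplementation := by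
  refine ⟨⟨⟨?_, fun q a q' h => Or.inl h,
    fun q a q' q'' _ _ => Subsingleton.elim _ _,
    fun q d q' q'' _ _ => Subsingleton.elim _ _,
    fun q => trivial,
    fun q q'' d₁ d₂ => ⟨fun _ => ⟨PUnit.unit, trivial, trivial⟩, fun _ => trivial⟩⟩,
    fun q a ha => ⟨PUnit.unit, ha⟩⟩, ?_⟩
  · show Disjoint S.inputs S.outputs
    exact lc_disj hS
  intro q
  refine ⟨?_, Or.inl fun d => ⟨PUnit.unit, trivial⟩⟩
  intro o ho q' d q'' hact _
  have ho' : o ∈ S.outputs := ho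
  have hact' : o ∈ S.inputs := hact
  exact absurd ho' (Set.disjoint_left.mp (lc_disj hS) hact')

/-- Forward direction: refinement implies implementation-set inclusion. -/
lemma mod_of_refines {S : TIOTS Act Q1} {T : TIOTS Act Q2}
    (hT : T.LocallyConsistent)
    (hin : S.inputs = T.inputs) (hout : S.outputs = T.outputs)
    (href : S.Refines T) :
    ∀ (QP : Type) (P : TIOTS Act QP), TIOTS.Mod S P → TIOTS.Mod T P := by
  rintro QP P ⟨hPim, hPin, hPout, hPS⟩
  obtain ⟨-, -, -, -, R2, hR2i, hR2⟩ := href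
  obtain ⟨-, -, -, -, R1, hR1i, hR1⟩ := hPS
  refine ⟨hPim, hPin.trans hin, hPout.trans hout, ?_, ?_, ?_, ?_,
    fun p t => ∃ s, R1 p s ∧ R2 s t, ⟨S.init, hR1i, hR2i⟩, ?_⟩
  · rw [hPin, hin]; exact hT.1.1.1
  · rw [hPout, hout]; exact (hT.1.1.1).symm
  · rw [hPin, hin]
  · rw [hPout, hout]
  · rintro p t ⟨s, h1, h2⟩
    obtain ⟨c1a, c1b, c1c, c1d, c1e⟩ := hR1 p s h1
    obtain ⟨c2a, c2b, c2c, c2d, c2e⟩ := hR2 s t h2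
    refine ⟨?_, ?_, ?_, ?_, ?_⟩
    · rintro a ⟨haT, haP⟩ t' ht'
      have haS : a ∈ S.inputs := by rwa [hPin] at haP
      obtain ⟨s', hs', hR2'⟩ := c2a a ⟨haT, haS⟩ t' ht'
      obtain ⟨p', hp', hR1'⟩ := c1a a ⟨haS, haP⟩ s' hs'
      exact ⟨p', hp', s', hR1', hR2'⟩
    · rintro a ⟨haT, haP⟩ t' ht'
      exact absurd (by rw [hPin, hin]; exact haT : a ∈ P.inputs) haP
    · rintro a ⟨haP, haT⟩ p' hp'
      have haS : a ∈ S.outputs := by rwa [hPout] at haP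
      obtain ⟨s', hs', hR1'⟩ := c1c a ⟨haP, haS⟩ p' hp'
      obtain ⟨t', ht', hR2'⟩ := c2c a ⟨haS, haT⟩ s' hs'
      exact ⟨t', ht', s', hR1', hR2'⟩
    · rintro a ⟨haP, haT⟩ p' hp'
      exact absurd (by rw [← hout, ← hPout]; exact haP : a ∈ T.outputs) haT
    · intro d p' hp'
      obtain ⟨s', hs', hR1'⟩ := c1e d p' hp'
      obtain ⟨t', ht', hR2'⟩ := c2e d s' hs'
      exact ⟨t', ht', s', hR1', hR2'⟩

end TIOTS

namespace TIOTS

variable {Act Q1 Q2 QP : Type}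

section Canon

variable (S : TIOTS Act Q1)

/-- `q` cannot delay forever. -/
def caseB (q : Q1) : Prop := ¬ ∀ d : ℝ≥0, ∃ x, S.delayTrans q d x

lemma caseB_spec (hS : S.LocallyConsistent) {q : Q1} (h : S.caseB q) :
    ∃ t : ℝ≥0 × Q1 × Act, t.2.2 ∈ S.outputs ∧ S.delayTrans q t.1 t.2.1 ∧
      ∃ y, S.actTrans t.2.1 t.2.2 y := by
  rcases (hS.2 q).resolve_left h with ⟨d, q', o, ho, hd, hy⟩
  exact ⟨⟨d, q', o⟩, ho, hd, hy⟩

/-- the chosen delay/state/output schedule of a state that cannot delay forever -/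
noncomputable def sch (hS : S.LocallyConsistent) {q : Q1} (h : S.caseB q) : ℝ≥0 × Q1 × Act :=
  (S.caseB_spec hS h).choose

lemma sch_out (hS : S.LocallyConsistent) {q : Q1} (h : S.caseB q) : (S.sch hS h).2.2 ∈ S.outputs :=
  (S.caseB_spec hS h).choose_spec.1

lemma sch_delay (hS : S.LocallyConsistent) {q : Q1} (h : S.caseB q) :
    S.delayTrans q (S.sch hS h).1 (S.sch hS h).2.1 :=
  (S.caseB_spec hS h).choose_spec.2.1

lemma sch_act (hS : S.LocallyConsistent) {q : Q1} (h : S.caseB q) :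
    ∃ y, S.actTrans (S.sch hS h).2.1 (S.sch hS h).2.2 y :=
  (S.caseB_spec hS h).choose_spec.2.2

/-- a state of the canonical implementation is valid if the delay exists and
respects the scheduled budget -/
def Valid (hS : S.LocallyConsistent) (q : Q1) (e : ℝ≥0) : Prop :=
  (∃ x, S.delayTrans q e x) ∧ ∀ h : S.caseB q, e ≤ (S.sch hS h).1

lemma valid_zero (hS : S.LocallyConsistent) (q : Q1) : S.Valid hS q 0 :=
  ⟨⟨q, lc_refl hS q⟩, fun _ => zero_le⟩

lemma valid_mono (hS : S.LocallyConsistent) {q : Q1} {e₁ e₂ : ℝ≥0} (h : S.Valid hS q e₂) (hle : e₁ ≤ e₂) :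
    S.Valid hS q e₁ := by
  obtain ⟨⟨x, hx⟩, hbud⟩ := h
  exact ⟨delay_of_le hS hx hle, fun hb => hle.trans (hbud hb)⟩

/-- Canonical implementation transitions (actions). -/
def impAct (hS : S.LocallyConsistent) (q : Q1) (e : ℝ≥0) (a : Act) (q' : Q1) (e' : ℝ≥0) : Prop :=
  (S.Valid hS q e ∧ a ∈ S.inputs ∧ e' = 0 ∧ ∃ x, S.delayTrans q e x ∧ S.actTrans x a q') ∨
  (¬ S.Valid hS q e ∧ a ∈ S.inputs ∧ q' = q ∧ e' = e) ∨
  (e' = 0 ∧ ∃ h : S.caseB q, e = (S.sch hS h).1 ∧ a = (S.sch hS h).2.2 ∧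
    S.actTrans (S.sch hS h).2.1 a q')

/-- Canonical implementation transitions (delays). -/
def impDelay (hS : S.LocallyConsistent) (q : Q1) (e d : ℝ≥0) (q' : Q1) (e' : ℝ≥0) : Prop :=
  (S.Valid hS q e ∧ S.Valid hS q (e + d) ∧ q' = q ∧ e' = e + d) ∨
  (¬ S.Valid hS q e ∧ q' = q ∧ e' = e)

end Canon

/-- the kind of move grafted at the root of the canonical implementation -/
inductive Move (Act : Type) where
  | pure : Move Act
  | inp : Act → Move Act
  | out : Act → Move Act
  | del : ℝ≥0 → Move Act

/-- The canonical implementation of `S` started at `s`, with a distinguished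
move at the start redirected into the machine `P`. -/
noncomputable def graft (S : TIOTS Act Q1) (hS : S.LocallyConsistent) (s : Q1)
    (mv : Move Act) (P : TIOTS Act QP) : TIOTS Act ((Q1 × ℝ≥0) ⊕ QP) where
  init := Sum.inl (s, 0)
  inputs := S.inputs
  outputs := S.outputs
  actTrans := fun w a w' =>
    match w, w' with
    | Sum.inr p, Sum.inr p' => P.actTrans p a p'
    | Sum.inr _, Sum.inl _ => False
    | Sum.inl (q, e), Sum.inl (q', e') =>
      match mv with
      | .pure => S.impAct hS q e a q' e'
      | .inp i =>
          (¬ (q = s ∧ e = 0) ∧ S.impAct hS q e a q' e') ∨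
          ((q = s ∧ e = 0) ∧
            ((a ∈ S.inputs ∧ a ≠ i ∧ e' = 0 ∧ S.actTrans s a q') ∨
             (e' = 0 ∧ ∃ h : S.caseB s, (0 : ℝ≥0) = (S.sch hS h).1 ∧
               a = (S.sch hS h).2.2 ∧ S.actTrans (S.sch hS h).2.1 a q')))
      | .out _ =>
          (¬ (q = s ∧ e = 0) ∧ S.impAct hS q e a q' e') ∨
          ((q = s ∧ e = 0) ∧ a ∈ S.inputs ∧ e' = 0 ∧ S.actTrans s a q')
      | .del dd =>
          (q ≠ s ∧ S.impAct hS q e a q' e') ∨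
          (q = s ∧
            ((e < dd ∧ a ∈ S.inputs ∧ e' = 0 ∧ ∃ x, S.delayTrans s e x ∧ S.actTrans x a q') ∨
             (¬ e < dd ∧ a ∈ S.inputs ∧ q' = s ∧ e' = e)))
    | Sum.inl (q, e), Sum.inr p =>
      match mv with
      | .inp i => q = s ∧ e = 0 ∧ a = i ∧ i ∈ S.inputs ∧ p = P.init
      | .out o => q = s ∧ e = 0 ∧ a = o ∧ o ∈ S.outputs ∧ p = P.init
      | _ => False
  delayTrans := fun w d w' =>
    match w, w' with
    | Sum.inr p, Sum.inr p' => P.delayTrans p d p'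
    | Sum.inr _, Sum.inl _ => False
    | Sum.inl (q, e), Sum.inl (q', e') =>
      match mv with
      | .pure => S.impDelay hS q e d q' e'
      | .inp _ => S.impDelay hS q e d q' e'
      | .out _ =>
          (¬ (q = s ∧ e = 0) ∧ S.impDelay hS q e d q' e') ∨
          ((q = s ∧ e = 0) ∧ d = 0 ∧ q' = s ∧ e' = 0)
      | .del dd =>
          (q ≠ s ∧ S.impDelay hS q e d q' e') ∨
          (q = s ∧ q' = s ∧
            ((e < dd ∧ e + d < dd ∧ e' = e + d) ∨ (¬ e < dd ∧ e' = e)))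
    | Sum.inl (q, e), Sum.inr p =>
      match mv with
      | .del dd => q = s ∧ e < dd ∧ dd ≤ e + d ∧ P.delayTrans P.init (e + d - dd) p
      | _ => False

end TIOTS

namespace TIOTS

variable {Act Q1 Q2 QP : Type}

section ImpLemmas

variable {S : TIOTS Act Q1} (hS : S.LocallyConsistent)

lemma impDelay_valid_target {q : Q1} {e d : ℝ≥0} {q' : Q1} {e' : ℝ≥0}
    (hv : S.Valid hS q e) (h : S.impDelay hS q e d q' e') :
    q' = q ∧ e' = e + d ∧ S.Valid hS q (e + d) := by
  rcases h with ⟨_, hv', hq, he⟩ | ⟨hnv, _, _⟩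
  · exact ⟨hq, he, hv'⟩
  · exact absurd hv hnv

lemma impDelay_det {q : Q1} {e d : ℝ≥0} {q' : Q1} {e' : ℝ≥0} {q'' : Q1} {e'' : ℝ≥0}
    (h1 : S.impDelay hS q e d q' e') (h2 : S.impDelay hS q e d q'' e'') :
    q' = q'' ∧ e' = e'' := by
  rcases h1 with ⟨hv, _, hq, he⟩ | ⟨hnv, hq, he⟩ <;>
    rcases h2 with ⟨hv2, _, hq2, he2⟩ | ⟨hnv2, hq2, he2⟩
  · exact ⟨hq.trans hq2.symm, he.trans he2.symm⟩
  · exact absurd hv hnv2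
  · exact absurd hv2 hnv
  · exact ⟨hq.trans hq2.symm, he.trans he2.symm⟩

lemma impDelay_refl (q : Q1) (e : ℝ≥0) : S.impDelay hS q e 0 q e := by
  by_cases hv : S.Valid hS q e
  · exact Or.inl ⟨hv, by rwa [add_zero], rfl, (add_zero e).symm⟩
  · exact Or.inr ⟨hv, rfl, rfl⟩

lemma impDelay_add {q : Q1} {e : ℝ≥0} {d₁ d₂ : ℝ≥0} {q'' : Q1} {e'' : ℝ≥0} :
    S.impDelay hS q e (d₁ + d₂) q'' e'' ↔
      ∃ q' e', S.impDelay hS q e d₁ q' e' ∧ S.impDelay hS q' e' d₂ q'' e'' := by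
  constructor
  · rintro (⟨hv, hv', hq, he⟩ | ⟨hnv, hq, he⟩)
    · have hle : e + d₁ ≤ e + (d₁ + d₂) := by
        rw [← add_assoc]; exact le_self_add
      have hvm : S.Valid hS q (e + d₁) := valid_mono S hS hv' hle
      refine ⟨q, e + d₁, Or.inl ⟨hv, hvm, rfl, rfl⟩, Or.inl ⟨hvm, ?_, hq, ?_⟩⟩
      · rwa [add_assoc]
      · rw [he, add_assoc]
    · exact ⟨q, e, Or.inr ⟨hnv, rfl, rfl⟩, Or.inr ⟨hnv, hq, he⟩⟩
  · rintro ⟨q', e', h1, h2⟩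
    rcases h1 with ⟨hv, hv', hq, he⟩ | ⟨hnv, hq, he⟩
    · subst hq; subst he
      rcases h2 with ⟨_, hv'', hq, he⟩ | ⟨hnv2, hq, he⟩
      · refine Or.inl ⟨hv, ?_, hq, ?_⟩
        · rwa [← add_assoc]
        · rw [he, add_assoc]
      · exact absurd hv' hnv2
    · subst hq; subst he
      rcases h2 with ⟨hv2, _, hq, he⟩ | ⟨hnv2, hq, he⟩
      · exact absurd hv2 hnv
      · exact Or.inr ⟨hnv, hq, he⟩

lemma impAct_det {q : Q1} {e : ℝ≥0} {a : Act} {q' : Q1} {e' : ℝ≥0} {q'' : Q1} {e'' : ℝ≥0}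
    (h1 : S.impAct hS q e a q' e') (h2 : S.impAct hS q e a q'' e'') :
    q' = q'' ∧ e' = e'' := by
  have hdisj := lc_disj hS
  rcases h1 with ⟨hv, ha, he, x, hx, hact⟩ | ⟨hnv, ha, hq, he⟩ | ⟨he, hb, hsch, haout, hact⟩ <;>
    rcases h2 with ⟨hv2, ha2, he2, x2, hx2, hact2⟩ | ⟨hnv2, ha2, hq2, he2⟩ |
      ⟨he2, hb2, hsch2, haout2, hact2⟩
  · cases lc_ddet hS q e x x2 hx hx2
    exact ⟨lc_adet hS x a q' q'' hact hact2, he.trans he2.symm⟩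
  · exact absurd hv hnv2
  · exact absurd (haout2 ▸ sch_out S hS hb2) (Set.disjoint_left.mp hdisj ha)
  · exact absurd hv2 hnv
  · exact ⟨hq.trans hq2.symm, he.trans he2.symm⟩
  · exact absurd (haout2 ▸ sch_out S hS hb2) (Set.disjoint_left.mp hdisj ha)
  · exact absurd (haout ▸ sch_out S hS hb) (Set.disjoint_left.mp hdisj ha2)
  · exact absurd (haout ▸ sch_out S hS hb) (Set.disjoint_left.mp hdisj ha2)
  · exact ⟨lc_adet hS _ a q' q'' hact hact2, he.trans he2.symm⟩

lemma impAct_notout {q : Q1} {e : ℝ≥0} {a : Act} {q' : Q1} {e' : ℝ≥0}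
    (ha : a ∈ S.outputs) (h : S.impAct hS q e a q' e') :
    e' = 0 ∧ ∃ hb : S.caseB q, e = (S.sch hS hb).1 ∧ a = (S.sch hS hb).2.2 ∧
      S.actTrans (S.sch hS hb).2.1 a q' := by
  rcases h with ⟨_, hain, _⟩ | ⟨_, hain, _⟩ | h3
  · exact absurd ha (Set.disjoint_left.mp (lc_disj hS) hain)
  · exact absurd ha (Set.disjoint_left.mp (lc_disj hS) hain)
  · exact h3

lemma impAct_enabled (q : Q1) (e : ℝ≥0) {a : Act} (ha : a ∈ S.inputs) :
    ∃ q' e', S.impAct hS q e a q' e' := by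
  by_cases hv : S.Valid hS q e
  · obtain ⟨x, hx⟩ := hv.1
    obtain ⟨q', hq'⟩ := lc_ie hS x a ha
    exact ⟨q', 0, Or.inl ⟨hv, ha, rfl, x, hx, hq'⟩⟩
  · exact ⟨q, e, Or.inr (Or.inl ⟨hv, ha, rfl, rfl⟩)⟩

/-- progress of the canonical implementation from a valid state -/
lemma imp_progress {q : Q1} {e : ℝ≥0} (hv : S.Valid hS q e) (hb : S.caseB q) :
    S.impDelay hS q e ((S.sch hS hb).1 - e) q (S.sch hS hb).1 ∧
      ∃ y, S.impAct hS q (S.sch hS hb).1 (S.sch hS hb).2.2 y 0 := by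
  have hle : e ≤ (S.sch hS hb).1 := hv.2 hb
  have hvv : S.Valid hS q (S.sch hS hb).1 :=
    ⟨⟨_, sch_delay S hS hb⟩, fun _ => le_refl _⟩
  obtain ⟨y, hy⟩ := sch_act S hS hb
  constructor
  · have : e + ((S.sch hS hb).1 - e) = (S.sch hS hb).1 := add_tsub_cancel_of_le hle
    exact Or.inl ⟨hv, by rwa [this], rfl, this.symm⟩
  · exact ⟨y, Or.inr (Or.inr ⟨rfl, hb, rfl, rfl, hy⟩)⟩

lemma imp_delay_forever {q : Q1} {e : ℝ≥0} (hv : S.Valid hS q e) (hb : ¬ S.caseB q)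
    (d : ℝ≥0) : S.impDelay hS q e d q (e + d) := by
  refine Or.inl ⟨hv, ⟨?_, fun h => absurd h hb⟩, rfl, rfl⟩
  exact not_not.mp hb (e + d)

end ImpLemmas

end TIOTS

namespace TIOTS

variable {Act Q1 Q2 QP : Type}

lemma impAct_lab {S : TIOTS Act Q1} (hS : S.LocallyConsistent)
    {q : Q1} {e : ℝ≥0} {a : Act} {q' : Q1} {e' : ℝ≥0}
    (h : S.impAct hS q e a q' e') : a ∈ S.inputs ∪ S.outputs := by
  rcases h with ⟨_, ha, _⟩ | ⟨_, ha, _⟩ | ⟨_, hb, _, ha, _⟩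
  · exact Or.inl ha
  · exact Or.inl ha
  · exact Or.inr (ha ▸ sch_out S hS hb)

lemma impDelay_mid_ns {S : TIOTS Act Q1} {hS : S.LocallyConsistent} {s q : Q1}
    {e d₁ : ℝ≥0} {q' : Q1} {e' : ℝ≥0}
    (hns : ¬ (q = s ∧ e = 0)) (h1 : S.impDelay hS q e d₁ q' e') :
    ¬ (q' = s ∧ e' = 0) := by
  rcases h1 with ⟨_, _, hq, he⟩ | ⟨_, hq, he⟩
  · rintro ⟨hqs, h0⟩
    rw [he] at h0
    have he0 : e = 0 := by
      have := le_antisymm (h0 ▸ le_self_add : e ≤ (0:ℝ≥0)) (zero_le)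
      exact this
    exact hns ⟨hq ▸ hqs, he0⟩
  · rintro ⟨hqs, h0⟩
    exact hns ⟨hq ▸ hqs, he ▸ h0⟩

lemma impDelay_urg {S : TIOTS Act Q1} {hS : S.LocallyConsistent} {q : Q1}
    {e d : ℝ≥0} {q'' : Q1} {e'' : ℝ≥0}
    (hb : S.caseB q) (hesch : e = (S.sch hS hb).1)
    (hdel : S.impDelay hS q e d q'' e'') : d = 0 := by
  have hv : S.Valid hS q e :=
    ⟨⟨_, hesch ▸ sch_delay S hS hb⟩, fun h => le_of_eq hesch⟩
  obtain ⟨-, -, hv'⟩ := impDelay_valid_target hS hv hdel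
  have hle : e + d ≤ e := le_of_le_of_eq (hv'.2 hb) hesch.symm
  have h' : e + d ≤ e + 0 := by simpa using hle
  exact le_antisymm (le_of_add_le_add_left h') (zero_le)

lemma graft_impl {S : TIOTS Act Q1} (hS : S.LocallyConsistent) (s : Q1) (mv : Move Act)
    (P : TIOTS Act QP) (hPim : P.IsImplementation)
    (hPin : P.inputs = S.inputs) (hPout : P.outputs = S.outputs)
    (hmv : match mv with
      | .out o => o ∈ S.outputs
      | .del dd => ∃ x, S.delayTrans s dd x
      | _ => True) :
    (S.graft hS s mv P).IsImplementation := by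
  obtain ⟨⟨⟨Pdisj, Plab, Padet, Pddet, Prefl, Padd⟩, Pie⟩, Pst⟩ := hPim
  have hdisj := lc_disj hS
  have hio : ∀ {a : Act}, a ∈ S.inputs → a ∈ S.outputs → False := by
    intro a h1 h2; exact Set.disjoint_left.mp hdisj h1 h2
  refine ⟨⟨⟨hdisj, ?_, ?_, ?_, ?_, ?_⟩, ?_⟩, ?_⟩
  -- labels
  · rintro (⟨q, e⟩ | p) a (⟨q', e'⟩ | p') h
    · cases mv with
      | pure => exact impAct_lab hS h
      | inp i =>
        rcases h with ⟨-, h⟩ | ⟨-, ⟨ha, -⟩ | ⟨-, hb, -, ha, -⟩⟩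
        · exact impAct_lab hS h
        · exact Or.inl ha
        · exact Or.inr (ha ▸ sch_out S hS hb)
      | out o =>
        rcases h with ⟨-, h⟩ | ⟨-, ha, -⟩
        · exact impAct_lab hS h
        · exact Or.inl ha
      | del dd =>
        rcases h with ⟨-, h⟩ | ⟨-, ⟨-, ha, -⟩ | ⟨-, ha, -⟩⟩
        · exact impAct_lab hS h
        · exact Or.inl ha
        · exact Or.inl ha
    · cases mv with
      | pure => exact h.elim
      | inp i => exact Or.inl (h.2.2.1 ▸ h.2.2.2.1)
      | out o => exact Or.inr (h.2.2.1 ▸ h.2.2.2.1)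
      | del dd => exact h.elim
    · exact h.elim
    · rcases Plab _ _ _ h with ha | ha
      · exact Or.inl (hPin ▸ ha)
      · exact Or.inr (hPout ▸ ha)
  -- action determinism
  · rintro (⟨q, e⟩ | p) a (⟨q', e'⟩ | p') (⟨q'', e''⟩ | p'') h1 h2
    · cases mv with
      | pure =>
        obtain ⟨hq, he⟩ := impAct_det hS h1 h2
        exact congrArg Sum.inl (Prod.ext hq he)
      | inp i =>
        rcases h1 with ⟨hns, h1⟩ | ⟨hsp, h1⟩ <;> rcases h2 with ⟨hns2, h2⟩ | ⟨hsp2, h2⟩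
        · obtain ⟨hq, he⟩ := impAct_det hS h1 h2
          exact congrArg Sum.inl (Prod.ext hq he)
        · exact absurd hsp2 hns
        · exact absurd hsp hns2
        · rcases h1 with ⟨ha, -, he, hact⟩ | ⟨he, hb, -, haout, hact⟩ <;>
            rcases h2 with ⟨ha2, -, he2, hact2⟩ | ⟨he2, hb2, -, haout2, hact2⟩
          · exact congrArg Sum.inl
              (Prod.ext (lc_adet hS s a q' q'' hact hact2) (he.trans he2.symm))
          · exact absurd (haout2 ▸ sch_out S hS hb2) (hio ha)
          · exact absurd (haout ▸ sch_out S hS hb) (hio ha2)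
          · exact congrArg Sum.inl
              (Prod.ext (lc_adet hS _ a q' q'' hact hact2) (he.trans he2.symm))
      | out o =>
        rcases h1 with ⟨hns, h1⟩ | ⟨hsp, h1⟩ <;> rcases h2 with ⟨hns2, h2⟩ | ⟨hsp2, h2⟩
        · obtain ⟨hq, he⟩ := impAct_det hS h1 h2
          exact congrArg Sum.inl (Prod.ext hq he)
        · exact absurd hsp2 hns
        · exact absurd hsp hns2
        · obtain ⟨-, he, hact⟩ := h1
          obtain ⟨-, he2, hact2⟩ := h2
          exact congrArg Sum.inl
            (Prod.ext (lc_adet hS s a q' q'' hact hact2) (he.trans he2.symm))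
      | del dd =>
        rcases h1 with ⟨hns, h1⟩ | ⟨hsp, h1⟩ <;> rcases h2 with ⟨hns2, h2⟩ | ⟨hsp2, h2⟩
        · obtain ⟨hq, he⟩ := impAct_det hS h1 h2
          exact congrArg Sum.inl (Prod.ext hq he)
        · exact absurd hsp2 hns
        · exact absurd hsp hns2
        · rcases h1 with ⟨hlt, -, he, x, hx, hact⟩ | ⟨hlt, -, hq, he⟩ <;>
            rcases h2 with ⟨hlt2, -, he2, x2, hx2, hact2⟩ | ⟨hlt2, -, hq2, he2⟩
          · cases lc_ddet hS s e x x2 hx hx2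
            exact congrArg Sum.inl
              (Prod.ext (lc_adet hS x a q' q'' hact hact2) (he.trans he2.symm))
          · exact absurd hlt hlt2
          · exact absurd hlt2 hlt
          · exact congrArg Sum.inl (Prod.ext (hq.trans hq2.symm) (he.trans he2.symm))
    · cases mv with
      | pure => exact h2.elim
      | inp i =>
        obtain ⟨hq2, he2, hai, hiin, -⟩ := h2
        rcases h1 with ⟨hns, h1⟩ | ⟨hsp, ⟨-, hne, -⟩ | ⟨-, hb, -, haout, -⟩⟩
        · exact absurd ⟨hq2, he2⟩ hns
        · exact absurd hai hne
        · exact ((hio (hai ▸ hiin) (haout ▸ sch_out S hS hb))).elim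
      | out o =>
        obtain ⟨hq2, he2, hao, hoout, -⟩ := h2
        rcases h1 with ⟨hns, h1⟩ | ⟨hsp, ha, -⟩
        · exact absurd ⟨hq2, he2⟩ hns
        · exact ((hio ha (hao ▸ hoout))).elim
      | del dd => exact h2.elim
    · cases mv with
      | pure => exact h1.elim
      | inp i =>
        obtain ⟨hq1, he1, hai, hiin, -⟩ := h1
        rcases h2 with ⟨hns, h2⟩ | ⟨hsp, ⟨-, hne, -⟩ | ⟨-, hb, -, haout, -⟩⟩
        · exact absurd ⟨hq1, he1⟩ hns
        · exact absurd hai hne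
        · exact ((hio (hai ▸ hiin) (haout ▸ sch_out S hS hb))).elim
      | out o =>
        obtain ⟨hq1, he1, hao, hoout, -⟩ := h1
        rcases h2 with ⟨hns, h2⟩ | ⟨hsp, ha, -⟩
        · exact absurd ⟨hq1, he1⟩ hns
        · exact ((hio ha (hao ▸ hoout))).elim
      | del dd => exact h1.elim
    · cases mv with
      | pure => exact (h1.elim : False).elim
      | inp i => cases h1.2.2.2.2; cases h2.2.2.2.2; rfl
      | out o => cases h1.2.2.2.2; cases h2.2.2.2.2; rfl
      | del dd => exact (h1.elim : False).elim
    · exact h1.elim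
    · exact h1.elim
    · exact h2.elim
    · exact congrArg Sum.inr (Padet _ _ _ _ h1 h2)
  -- delay determinism
  · rintro (⟨q, e⟩ | p) d (⟨q', e'⟩ | p') (⟨q'', e''⟩ | p'') h1 h2
    · cases mv with
      | pure =>
        obtain ⟨hq, he⟩ := impDelay_det hS h1 h2
        exact congrArg Sum.inl (Prod.ext hq he)
      | inp i =>
        obtain ⟨hq, he⟩ := impDelay_det hS h1 h2
        exact congrArg Sum.inl (Prod.ext hq he)
      | out o =>
        rcases h1 with ⟨hns, h1⟩ | ⟨hsp, -, hq, he⟩ <;>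
          rcases h2 with ⟨hns2, h2⟩ | ⟨hsp2, -, hq2, he2⟩
        · obtain ⟨hq, he⟩ := impDelay_det hS h1 h2
          exact congrArg Sum.inl (Prod.ext hq he)
        · exact absurd hsp2 hns
        · exact absurd hsp hns2
        · exact congrArg Sum.inl (Prod.ext (hq.trans hq2.symm) (he.trans he2.symm))
      | del dd =>
        rcases h1 with ⟨hns, h1⟩ | ⟨hqs1, hq, h1⟩ <;> rcases h2 with ⟨hns2, h2⟩ | ⟨hqs2, hq2, h2⟩
        · obtain ⟨hq, he⟩ := impDelay_det hS h1 h2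
          exact congrArg Sum.inl (Prod.ext hq he)
        · exact absurd hqs2 hns
        · exact absurd hqs1 hns2
        · rcases h1 with ⟨hlt, -, he⟩ | ⟨hlt, he⟩ <;> rcases h2 with ⟨hlt2, -, he2⟩ | ⟨hlt2, he2⟩
          · exact congrArg Sum.inl (Prod.ext (hq.trans hq2.symm) (he.trans he2.symm))
          · exact absurd hlt hlt2
          · exact absurd hlt2 hlt
          · exact congrArg Sum.inl (Prod.ext (hq.trans hq2.symm) (he.trans he2.symm))
    · cases mv with
      | pure => exact h2.elim
      | inp i => exact h2.elim
      | out o => exact h2.elim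
      | del dd =>
        obtain ⟨hq2s, hlt2, hle2, -⟩ := h2
        rcases h1 with ⟨hns, h1⟩ | ⟨-, -, ⟨-, hlt, -⟩ | ⟨hnlt, -⟩⟩
        · exact absurd hq2s hns
        · exact absurd hlt (not_lt.2 hle2)
        · exact absurd hlt2 hnlt
    · cases mv with
      | pure => exact h1.elim
      | inp i => exact h1.elim
      | out o => exact h1.elim
      | del dd =>
        obtain ⟨hq1s, hlt1, hle1, -⟩ := h1
        rcases h2 with ⟨hns, h2⟩ | ⟨-, -, ⟨-, hlt, -⟩ | ⟨hnlt, -⟩⟩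
        · exact absurd hq1s hns
        · exact absurd hlt (not_lt.2 hle1)
        · exact absurd hlt1 hnlt
    · cases mv with
      | pure => exact h1.elim
      | inp i => exact h1.elim
      | out o => exact h1.elim
      | del dd => exact congrArg Sum.inr (Pddet _ _ _ _ h1.2.2.2 h2.2.2.2)
    · exact h1.elim
    · exact h1.elim
    · exact h2.elim
    · exact congrArg Sum.inr (Pddet _ _ _ _ h1 h2)
  -- time reflexivity
  · rintro (⟨q, e⟩ | p)
    · cases mv with
      | pure => exact impDelay_refl hS q e
      | inp i => exact impDelay_refl hS q e
      | out o =>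
        by_cases hsp : q = s ∧ e = 0
        · exact Or.inr ⟨hsp, rfl, hsp.1, hsp.2⟩
        · exact Or.inl ⟨hsp, impDelay_refl hS q e⟩
      | del dd =>
        by_cases hqs : q = s
        · subst hqs
          by_cases he : e < dd
          · exact Or.inr ⟨rfl, rfl, Or.inl ⟨he, by rwa [add_zero], (add_zero e).symm⟩⟩
          · exact Or.inr ⟨rfl, rfl, Or.inr ⟨he, rfl⟩⟩
        · exact Or.inl ⟨hqs, impDelay_refl hS q e⟩
    · exact Prefl p
  -- time additivity
  · rintro (⟨q, e⟩ | p) (⟨q'', e''⟩ | p'') d₁ d₂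
    · cases mv with
      | pure =>
        constructor
        · intro h
          obtain ⟨q', e', h1, h2⟩ := (impDelay_add hS).1 h
          exact ⟨Sum.inl (q', e'), h1, h2⟩
        · rintro ⟨(⟨q', e'⟩ | p'), h1, h2⟩
          · exact (impDelay_add hS).2 ⟨q', e', h1, h2⟩
          · exact h1.elim
      | inp i =>
        constructor
        · intro h
          obtain ⟨q', e', h1, h2⟩ := (impDelay_add hS).1 h
          exact ⟨Sum.inl (q', e'), h1, h2⟩
        · rintro ⟨(⟨q', e'⟩ | p'), h1, h2⟩
          · exact (impDelay_add hS).2 ⟨q', e', h1, h2⟩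
          · exact h1.elim
      | out o =>
        constructor
        · rintro (⟨hns, h⟩ | ⟨hsp, hd, hq, he⟩)
          · obtain ⟨q', e', h1, h2⟩ := (impDelay_add hS).1 h
            exact ⟨Sum.inl (q', e'), Or.inl ⟨hns, h1⟩,
              Or.inl ⟨impDelay_mid_ns hns h1, h2⟩⟩
          · have hd1 : d₁ = 0 := le_antisymm (hd ▸ le_self_add) (zero_le)
            have hd2 : d₂ = 0 := le_antisymm (hd ▸ le_add_self) (zero_le)
            exact ⟨Sum.inl (s, 0), Or.inr ⟨hsp, hd1, rfl, rfl⟩,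
              Or.inr ⟨⟨rfl, rfl⟩, hd2, hq, he⟩⟩
        · rintro ⟨(⟨q', e'⟩ | p'), h1, h2⟩
          · rcases h1 with ⟨hns, h1⟩ | ⟨hsp, hd1, hq1, he1⟩
            · rcases h2 with ⟨hns2, h2⟩ | ⟨hsp2, -⟩
              · exact Or.inl ⟨hns, (impDelay_add hS).2 ⟨q', e', h1, h2⟩⟩
              · exact absurd hsp2 (impDelay_mid_ns hns h1)
            · subst hq1; subst he1
              rcases h2 with ⟨hns2, h2⟩ | ⟨-, hd2, hq2, he2⟩
              · exact absurd ⟨rfl, rfl⟩ hns2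
              · exact Or.inr ⟨hsp, by rw [hd1, hd2, add_zero], hq2, he2⟩
          · exact h1.elim
      | del dd =>
        by_cases hqs : q = s
        · subst hqs
          constructor
          · rintro (⟨hne, -⟩ | ⟨-, hq, h⟩)
            · exact absurd rfl hne
            · rcases h with ⟨he, hlt, heq⟩ | ⟨hne, heq⟩
              · by_cases hc : e + d₁ < dd
                · refine ⟨Sum.inl (q, e + d₁), Or.inr ⟨rfl, rfl, Or.inl ⟨he, hc, rfl⟩⟩,
                    Or.inr ⟨rfl, hq, Or.inl ⟨hc, ?_, ?_⟩⟩⟩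
                  · rw [add_assoc]; exact hlt
                  · rw [heq, add_assoc]
                · exact (hc (lt_of_le_of_lt (by rw [← add_assoc]; exact le_self_add) hlt)).elim
              · exact ⟨Sum.inl (q, e), Or.inr ⟨rfl, rfl, Or.inr ⟨hne, rfl⟩⟩,
                  Or.inr ⟨rfl, hq, Or.inr ⟨hne, heq⟩⟩⟩
          · rintro ⟨(⟨q', e'⟩ | p'), h1, h2⟩
            · rcases h1 with ⟨hne, -⟩ | ⟨-, hq1, h1⟩
              · exact absurd rfl hne
              · subst hq1
                rcases h1 with ⟨he, hlt1, heq1⟩ | ⟨hne1, heq1⟩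
                · subst heq1
                  rcases h2 with ⟨hne, -⟩ | ⟨-, hq2, h2⟩
                  · exact absurd rfl hne
                  · rcases h2 with ⟨-, hlt2, heq2⟩ | ⟨hne2, -⟩
                    · refine Or.inr ⟨rfl, hq2, Or.inl ⟨he, ?_, ?_⟩⟩
                      · rw [← add_assoc]; exact hlt2
                      · rw [← add_assoc]; exact heq2
                    · exact absurd hlt1 hne2
                · subst heq1
                  rcases h2 with ⟨hne, -⟩ | ⟨-, hq2, h2⟩
                  · exact absurd rfl hne
                  · rcases h2 with ⟨hlt2, -⟩ | ⟨-, heq2⟩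
                    · exact absurd hlt2 hne1
                    · exact Or.inr ⟨rfl, hq2, Or.inr ⟨hne1, heq2⟩⟩
            · exact h2.elim
        · constructor
          · rintro (⟨-, h⟩ | ⟨hq, -⟩)
            · obtain ⟨q', e', h1, h2⟩ := (impDelay_add hS).1 h
              have hq' : q' = q := by
                rcases h1 with ⟨-, -, hq', -⟩ | ⟨-, hq', -⟩ <;> exact hq'
              refine ⟨Sum.inl (q', e'), Or.inl ⟨hq' ▸ hqs, h1⟩, Or.inl ⟨hq' ▸ hqs, h2⟩⟩
            · exact absurd hq hqs
          · rintro ⟨(⟨q', e'⟩ | p'), h1, h2⟩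
            · rcases h1 with ⟨-, h1⟩ | ⟨hq, -⟩
              · have hq' : q' = q := by
                  rcases h1 with ⟨-, -, hq', -⟩ | ⟨-, hq', -⟩ <;> exact hq'
                rcases h2 with ⟨-, h2⟩ | ⟨hq2, -⟩
                · exact Or.inl ⟨hqs, (impDelay_add hS).2 ⟨q', e', h1, h2⟩⟩
                · exact absurd (hq' ▸ hq2) hqs
              · exact absurd hq hqs
            · rcases h1 with ⟨hq, -⟩
              exact absurd hq hqs
    · cases mv with
      | pure =>
        constructor
        · exact fun h => h.elim
        · rintro ⟨(⟨q', e'⟩ | p'), h1, h2⟩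
          · exact h2.elim
          · exact h1.elim
      | inp i =>
        constructor
        · exact fun h => h.elim
        · rintro ⟨(⟨q', e'⟩ | p'), h1, h2⟩
          · exact h2.elim
          · exact h1.elim
      | out o =>
        constructor
        · exact fun h => h.elim
        · rintro ⟨(⟨q', e'⟩ | p'), h1, h2⟩
          · exact h2.elim
          · exact h1.elim
      | del dd =>
        by_cases hqs : q = s
        · subst hqs
          by_cases he : e < dd
          · constructor
            · rintro ⟨-, -, hle, hP⟩
              by_cases hc : e + d₁ < dd
              · refine ⟨Sum.inl (q, e + d₁), Or.inr ⟨rfl, rfl, Or.inl ⟨he, hc, rfl⟩⟩,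
                  ⟨rfl, hc, ?_, ?_⟩⟩
                · rwa [← add_assoc] at hle
                · rwa [← add_assoc] at hP
              · have hc' : dd ≤ e + d₁ := not_lt.1 hc
                have heq : (e + d₁ - dd) + d₂ = e + (d₁ + d₂) - dd := by
                  rw [tsub_add_eq_add_tsub hc', add_assoc]
                rw [← heq] at hP
                obtain ⟨p1, hp1, hp2⟩ := (Padd P.init p'' (e + d₁ - dd) d₂).1 hP
                exact ⟨Sum.inr p1, ⟨rfl, he, hc', hp1⟩, hp2⟩
            · rintro ⟨(⟨q', e'⟩ | p'), h1, h2⟩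
              · rcases h1 with ⟨hne, -⟩ | ⟨-, hq1, h1⟩
                · exact absurd rfl hne
                · subst hq1
                  rcases h1 with ⟨-, hlt1, heq1⟩ | ⟨hne1, heq1⟩
                  · subst heq1
                    obtain ⟨-, -, hle2, hP2⟩ := h2
                    refine ⟨rfl, he, ?_, ?_⟩
                    · rwa [add_assoc] at hle2
                    · rwa [add_assoc] at hP2
                  · subst heq1
                    obtain ⟨-, hlt2, -⟩ := h2
                    exact absurd hlt2 hne1
              · obtain ⟨-, -, hc', hP1⟩ := h1
                have heq : (e + d₁ - dd) + d₂ = e + (d₁ + d₂) - dd := by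
                  rw [tsub_add_eq_add_tsub hc', add_assoc]
                refine ⟨rfl, he, le_trans hc' (by rw [← add_assoc]; exact le_self_add), ?_⟩
                rw [← heq]
                exact (Padd P.init p'' (e + d₁ - dd) d₂).2 ⟨p', hP1, h2⟩
          · constructor
            · rintro ⟨-, hlt, -⟩
              exact absurd hlt he
            · rintro ⟨(⟨q', e'⟩ | p'), h1, h2⟩
              · rcases h1 with ⟨hne, -⟩ | ⟨-, hq1, h1⟩
                · exact absurd rfl hne
                · subst hq1
                  rcases h1 with ⟨hlt1, -⟩ | ⟨-, heq1⟩
                  · exact absurd hlt1 he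
                  · subst heq1
                    exact absurd h2.2.1 he
              · exact absurd h1.2.1 he
        · constructor
          · rintro ⟨hq, -⟩
            exact absurd hq hqs
          · rintro ⟨(⟨q', e'⟩ | p'), h1, h2⟩
            · rcases h1 with ⟨-, h1⟩ | ⟨hq, -⟩
              · have hq' : q' = q := by
                  rcases h1 with ⟨-, -, hq', -⟩ | ⟨-, hq', -⟩ <;> exact hq'
                exact absurd (hq' ▸ h2.1) hqs
              · exact absurd hq hqs
            · exact absurd h1.1 hqs
    · constructor
      · exact fun h => h.elim
      · rintro ⟨(⟨q', e'⟩ | p'), h1, h2⟩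
        · exact h1.elim
        · exact h2.elim
    · constructor
      · intro h
        obtain ⟨p', hp1, hp2⟩ := (Padd p p'' d₁ d₂).1 h
        exact ⟨Sum.inr p', hp1, hp2⟩
      · rintro ⟨(⟨q', e'⟩ | p'), h1, h2⟩
        · exact h1.elim
        · exact (Padd p p'' d₁ d₂).2 ⟨p', h1, h2⟩
  -- input enabledness
  · rintro (⟨q, e⟩ | p) a ha
    · cases mv with
      | pure =>
        obtain ⟨q', e', h⟩ := impAct_enabled hS q e ha
        exact ⟨Sum.inl (q', e'), h⟩
      | inp i =>
        by_cases hsp : q = s ∧ e = 0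
        · by_cases hai : a = i
          · exact ⟨Sum.inr P.init, hsp.1, hsp.2, hai, hai ▸ ha, rfl⟩
          · obtain ⟨q', hq'⟩ := lc_ie hS s a ha
            exact ⟨Sum.inl (q', 0), Or.inr ⟨hsp, Or.inl ⟨ha, hai, rfl, hq'⟩⟩⟩
        · obtain ⟨q', e', h⟩ := impAct_enabled hS q e ha
          exact ⟨Sum.inl (q', e'), Or.inl ⟨hsp, h⟩⟩
      | out o =>
        by_cases hsp : q = s ∧ e = 0
        · obtain ⟨q', hq'⟩ := lc_ie hS s a ha
          exact ⟨Sum.inl (q', 0), Or.inr ⟨hsp, ha, rfl, hq'⟩⟩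
        · obtain ⟨q', e', h⟩ := impAct_enabled hS q e ha
          exact ⟨Sum.inl (q', e'), Or.inl ⟨hsp, h⟩⟩
      | del dd =>
        by_cases hqs : q = s
        · subst hqs
          by_cases he : e < dd
          · obtain ⟨x0, hx0⟩ := hmv
            obtain ⟨x, hx⟩ := delay_of_le hS hx0 he.le
            obtain ⟨q', hq'⟩ := lc_ie hS x a ha
            exact ⟨Sum.inl (q', 0), Or.inr ⟨rfl, Or.inl ⟨he, ha, rfl, x, hx, hq'⟩⟩⟩
          · exact ⟨Sum.inl (q, e), Or.inr ⟨rfl, Or.inr ⟨he, ha, rfl, rfl⟩⟩⟩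
        · obtain ⟨q', e', h⟩ := impAct_enabled hS q e ha
          exact ⟨Sum.inl (q', e'), Or.inl ⟨hqs, h⟩⟩
    · obtain ⟨p', hp'⟩ := Pie p a (by rwa [hPin])
      exact ⟨Sum.inr p', hp'⟩
  -- output urgency and independent progress
  · rintro (⟨q, e⟩ | p)
    · constructor
      -- output urgency
      · rintro o ho (⟨q', e'⟩ | p') d (⟨q'', e''⟩ | p'') hact hdel
        · -- w' inl, w'' inl
          cases mv with
          | pure =>
            obtain ⟨-, hb, hesch, -, -⟩ := impAct_notout hS ho hact
            exact impDelay_urg hb hesch hdel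
          | inp i =>
            rcases hact with ⟨hns, hact⟩ | ⟨hsp, ⟨ha, -⟩ | ⟨-, hb, h0, -, -⟩⟩
            · obtain ⟨-, hb, hesch, -, -⟩ := impAct_notout hS ho hact
              exact impDelay_urg hb hesch hdel
            · exact (hio ha ho).elim
            · obtain ⟨rfl, rfl⟩ := hsp
              exact impDelay_urg hb h0 hdel
          | out o' =>
            rcases hact with ⟨hns, hact⟩ | ⟨hsp, ha, -⟩
            · obtain ⟨-, hb, hesch, -, -⟩ := impAct_notout hS ho hact
              rcases hdel with ⟨-, hdel⟩ | ⟨-, hd, -⟩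
              · exact impDelay_urg hb hesch hdel
              · exact hd
            · exact (hio ha ho).elim
          | del dd =>
            rcases hact with ⟨hqs, hact⟩ | ⟨hqs, ⟨-, ha, -⟩ | ⟨-, ha, -⟩⟩
            · obtain ⟨-, hb, hesch, -, -⟩ := impAct_notout hS ho hact
              rcases hdel with ⟨-, hdel⟩ | ⟨hqs2, -⟩
              · exact impDelay_urg hb hesch hdel
              · exact absurd hqs2 hqs
            · exact (hio ha ho).elim
            · exact (hio ha ho).elim
        · -- w' inl, w'' inr (delay into P)
          cases mv with
          | pure => exact hdel.elim
          | inp i => exact hdel.elim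
          | out o' => exact hdel.elim
          | del dd =>
            obtain ⟨hqs2, hlt2, -, -⟩ := hdel
            rcases hact with ⟨hqs, hact⟩ | ⟨-, ⟨-, ha, -⟩ | ⟨-, ha, -⟩⟩
            · exact absurd hqs2 hqs
            · exact (hio ha ho).elim
            · exact (hio ha ho).elim
        · -- w' inr (act into P)
          cases mv with
          | pure => exact hact.elim
          | inp i =>
            obtain ⟨-, -, rfl, hiin, -⟩ := hact
            exact (hio hiin ho).elim
          | out o' =>
            obtain ⟨rfl, rfl, -, -, -⟩ := hact
            rcases hdel with ⟨hns, -⟩ | ⟨-, hd, -⟩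
            · exact absurd ⟨rfl, rfl⟩ hns
            · exact hd
          | del dd => exact hact.elim
        · -- w' inr, w'' inr
          cases mv with
          | pure => exact hact.elim
          | inp i =>
            obtain ⟨-, -, rfl, hiin, -⟩ := hact
            exact (hio hiin ho).elim
          | out o' =>
            obtain ⟨rfl, rfl, -, -, -⟩ := hact
            exact hdel.elim
          | del dd => exact hact.elim
      -- independent progress
      · cases mv with
        | pure =>
          by_cases hv : S.Valid hS q e
          · by_cases hb : S.caseB q
            · obtain ⟨hdel, y, hact⟩ := imp_progress hS hv hb
              exact Or.inr ⟨(S.sch hS hb).1 - e, Sum.inl (q, (S.sch hS hb).1),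
                (S.sch hS hb).2.2, sch_out S hS hb, hdel, Sum.inl (y, 0), hact⟩
            · exact Or.inl fun d => ⟨Sum.inl (q, e + d), imp_delay_forever hS hv hb d⟩
          · exact Or.inl fun d => ⟨Sum.inl (q, e), Or.inr ⟨hv, rfl, rfl⟩⟩
        | inp i =>
          by_cases hv : S.Valid hS q e
          · by_cases hb : S.caseB q
            · have hdel := (imp_progress hS hv hb).1
              obtain ⟨y, hy⟩ := sch_act S hS hb
              refine Or.inr ⟨(S.sch hS hb).1 - e, Sum.inl (q, (S.sch hS hb).1),
                (S.sch hS hb).2.2, sch_out S hS hb, hdel, Sum.inl (y, 0), ?_⟩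
              by_cases hsp : q = s ∧ (S.sch hS hb).1 = 0
              · obtain ⟨rfl, h0⟩ := hsp
                exact Or.inr ⟨⟨rfl, h0⟩, Or.inr ⟨rfl, hb, h0.symm, rfl, hy⟩⟩
              · exact Or.inl ⟨hsp, Or.inr (Or.inr ⟨rfl, hb, rfl, rfl, hy⟩)⟩
            · exact Or.inl fun d => ⟨Sum.inl (q, e + d), imp_delay_forever hS hv hb d⟩
          · exact Or.inl fun d => ⟨Sum.inl (q, e), Or.inr ⟨hv, rfl, rfl⟩⟩
        | out o' =>
          by_cases hsp : q = s ∧ e = 0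
          · obtain ⟨rfl, rfl⟩ := hsp
            exact Or.inr ⟨0, Sum.inl (q, 0), o', hmv,
              Or.inr ⟨⟨rfl, rfl⟩, rfl, rfl, rfl⟩, Sum.inr P.init, rfl, rfl, rfl, hmv, rfl⟩
          · by_cases hv : S.Valid hS q e
            · by_cases hb : S.caseB q
              · have hdel := (imp_progress hS hv hb).1
                obtain ⟨y, hy⟩ := sch_act S hS hb
                have htns : ¬ (q = s ∧ (S.sch hS hb).1 = 0) := by
                  rintro ⟨rfl, h0⟩
                  have he0 : e = 0 := le_antisymm (h0 ▸ hv.2 hb) (zero_le)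
                  exact hsp ⟨rfl, he0⟩
                exact Or.inr ⟨(S.sch hS hb).1 - e, Sum.inl (q, (S.sch hS hb).1),
                  (S.sch hS hb).2.2, sch_out S hS hb, Or.inl ⟨hsp, hdel⟩, Sum.inl (y, 0),
                  Or.inl ⟨htns, Or.inr (Or.inr ⟨rfl, hb, rfl, rfl, hy⟩)⟩⟩
              · exact Or.inl fun d =>
                  ⟨Sum.inl (q, e + d), Or.inl ⟨hsp, imp_delay_forever hS hv hb d⟩⟩
            · exact Or.inl fun d => ⟨Sum.inl (q, e), Or.inl ⟨hsp, Or.inr ⟨hv, rfl, rfl⟩⟩⟩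
        | del dd =>
          by_cases hqs : q = s
          · subst hqs
            by_cases he : e < dd
            · rcases (Pst P.init).2 with hPd | ⟨d0, p', o, ho, hd0, p'', hp''⟩
              · left
                intro d
                by_cases hc : e + d < dd
                · exact ⟨Sum.inl (q, e + d), Or.inr ⟨rfl, rfl, Or.inl ⟨he, hc, rfl⟩⟩⟩
                · obtain ⟨p', hp'⟩ := hPd (e + d - dd)
                  exact ⟨Sum.inr p', rfl, he, not_lt.1 hc, hp'⟩
              · right
                have h1 : e + ((dd - e) + d0) = dd + d0 := by
                  rw [← add_assoc, add_tsub_cancel_of_le he.le]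
                refine ⟨(dd - e) + d0, Sum.inr p', o, hPout ▸ ho,
                  ⟨rfl, he, ?_, ?_⟩, Sum.inr p'', hp''⟩
                · rw [h1]; exact le_self_add
                · rw [h1, add_tsub_cancel_left]; exact hd0
            · exact Or.inl fun d => ⟨Sum.inl (q, e), Or.inr ⟨rfl, rfl, Or.inr ⟨he, rfl⟩⟩⟩
          · by_cases hv : S.Valid hS q e
            · by_cases hb : S.caseB q
              · obtain ⟨hdel, y, hact⟩ := imp_progress hS hv hb
                exact Or.inr ⟨(S.sch hS hb).1 - e, Sum.inl (q, (S.sch hS hb).1),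
                  (S.sch hS hb).2.2, sch_out S hS hb, Or.inl ⟨hqs, hdel⟩, Sum.inl (y, 0),
                  Or.inl ⟨hqs, hact⟩⟩
              · exact Or.inl fun d =>
                  ⟨Sum.inl (q, e + d), Or.inl ⟨hqs, imp_delay_forever hS hv hb d⟩⟩
            · exact Or.inl fun d => ⟨Sum.inl (q, e), Or.inl ⟨hqs, Or.inr ⟨hv, rfl, rfl⟩⟩⟩
    · constructor
      · rintro o ho (⟨q', e'⟩ | p') d (⟨q'', e''⟩ | p'') hact hdel
        · exact hact.elim
        · exact hact.elim
        · exact hdel.elim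
        · exact (Pst p).1 o (hPout.symm ▸ ho) p' d p'' hact hdel
      · rcases (Pst p).2 with hPd | ⟨d0, p', o, ho, hd0, p'', hp''⟩
        · left
          intro d
          obtain ⟨p', hp'⟩ := hPd d
          exact ⟨Sum.inr p', hp'⟩
        · exact Or.inr ⟨d0, Sum.inr p', o, hPout ▸ ho, hd0, Sum.inr p'', hp''⟩

end TIOTS

namespace TIOTS

variable {Act Q1 Q2 QP : Type}

lemma R0_output {S : TIOTS Act Q1} {hS : S.LocallyConsistent} {q : Q1} {e : ℝ≥0}
    {a : Act} {q' x : Q1} {e' : ℝ≥0} (hdelx : S.delayTrans q e x)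
    (h : e' = 0 ∧ ∃ hb : S.caseB q, e = (S.sch hS hb).1 ∧ a = (S.sch hS hb).2.2 ∧
      S.actTrans (S.sch hS hb).2.1 a q') :
    S.actTrans x a q' := by
  obtain ⟨-, hb, hesch, -, hact⟩ := h
  have hd2 : S.delayTrans q e (S.sch hS hb).2.1 := by
    rw [hesch]; exact sch_delay S hS hb
  rw [lc_ddet hS q e x (S.sch hS hb).2.1 hdelx hd2]
  exact hact

lemma R0_delay {S : TIOTS Act Q1} {hS : S.LocallyConsistent} {q : Q1} {e δ : ℝ≥0}
    {q' x : Q1} {e' : ℝ≥0} (hval : S.Valid hS q e) (hdelx : S.delayTrans q e x)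
    (h : S.impDelay hS q e δ q' e') :
    q' = q ∧ e' = e + δ ∧ S.Valid hS q (e + δ) ∧
      ∃ y, S.delayTrans x δ y ∧ S.delayTrans q (e + δ) y := by
  obtain ⟨hq, he, hv'⟩ := impDelay_valid_target hS hval h
  obtain ⟨y, hy⟩ := hv'.1
  exact ⟨hq, he, hv', y, delay_split hS hdelx hy, hy⟩

/-- The grafted machine refines `S` started at the graft root. -/
lemma graft_refines {S : TIOTS Act Q1} (hS : S.LocallyConsistent) {s s' : Q1}
    (mv : Move Act) {P : TIOTS Act QP} (Rp : QP → Q1 → Prop)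
    (hPin : P.inputs = S.inputs) (hPout : P.outputs = S.outputs)
    (hRp : ∀ p x, Rp p x →
      (∀ a ∈ S.inputs, ∀ x', S.actTrans x a x' → ∃ p', P.actTrans p a p' ∧ Rp p' x') ∧
      (∀ a ∈ S.outputs, ∀ p', P.actTrans p a p' → ∃ x', S.actTrans x a x' ∧ Rp p' x') ∧
      (∀ (d : ℝ≥0) (p' : QP), P.delayTrans p d p' → ∃ x', S.delayTrans x d x' ∧ Rp p' x'))
    (hlink : match mv with
      | .pure => True
      | .inp i => i ∈ S.inputs ∧ S.actTrans s i s' ∧ Rp P.init s'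
      | .out o => o ∈ S.outputs ∧ S.actTrans s o s' ∧ Rp P.init s'
      | .del dd => 0 < dd ∧ S.delayTrans s dd s' ∧ Rp P.init s') :
    (S.graft hS s mv P).Refines (S.withInit s) := by
  have hdisjS := lc_disj hS
  have hio : ∀ {a : Act}, a ∈ S.inputs → a ∈ S.outputs → False := by
    intro a h1 h2; exact Set.disjoint_left.mp hdisjS h1 h2
  refine ⟨hdisjS, hdisjS.symm, subset_rfl, subset_rfl,
    fun w x =>
      match w with
      | Sum.inl (q, e) =>
        (match mv with
          | .del dd => (q = s ∧ e < dd ∧ S.delayTrans s e x) ∨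
              (q ≠ s ∧ S.Valid hS q e ∧ S.delayTrans q e x)
          | _ => S.Valid hS q e ∧ S.delayTrans q e x)
      | Sum.inr p => Rp p x, ?_, ?_⟩
  · -- anchor
    cases mv with
    | pure => exact ⟨valid_zero S hS s, lc_refl hS s⟩
    | inp i => exact ⟨valid_zero S hS s, lc_refl hS s⟩
    | out o => exact ⟨valid_zero S hS s, lc_refl hS s⟩
    | del dd => exact Or.inl ⟨rfl, hlink.1, lc_refl hS s⟩
  · rintro (⟨q, e⟩ | p) x hR0
    · -- state of the imp part
      cases mv with
      | pure =>
        obtain ⟨hval, hdelx⟩ := hR0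
        refine ⟨?_, ?_, ?_, ?_, ?_⟩
        · rintro a ⟨ha, -⟩ x' hx'
          exact ⟨Sum.inl (x', 0), Or.inl ⟨hval, ha, rfl, x, hdelx, hx'⟩,
            valid_zero S hS x', lc_refl hS x'⟩
        · rintro a ⟨ha, hna⟩
          exact absurd ha hna
        · rintro a ⟨ha, -⟩ (⟨q', e'⟩ | p') hact
          · obtain ⟨rfl, hrest⟩ := impAct_notout hS ha hact
            exact ⟨q', R0_output (hS := hS) hdelx ⟨rfl, hrest⟩, valid_zero S hS q', lc_refl hS q'⟩
          · exact hact.elim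
        · rintro a ⟨ha, hna⟩
          exact absurd ha hna
        · rintro δ (⟨q', e'⟩ | p') hdel
          · obtain ⟨rfl, rfl, hv', y, hxy, hqy⟩ := R0_delay hval hdelx hdel
            exact ⟨y, hxy, hv', hqy⟩
          · exact hdel.elim
      | inp i =>
        obtain ⟨hval, hdelx⟩ := hR0
        refine ⟨?_, ?_, ?_, ?_, ?_⟩
        · rintro a ⟨ha, -⟩ x' hx'
          by_cases hsp : q = s ∧ e = 0
          · obtain ⟨rfl, rfl⟩ := hsp
            have hxq : x = q := lc_ddet hS q 0 x q hdelx (lc_refl hS q)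
            subst hxq
            by_cases hai : a = i
            · subst hai
              have hx's : x' = s' := lc_adet hS x a x' s' hx' hlink.2.1
              subst hx's
              exact ⟨Sum.inr P.init, ⟨rfl, rfl, rfl, hlink.1, rfl⟩, hlink.2.2⟩
            · exact ⟨Sum.inl (x', 0), Or.inr ⟨⟨rfl, rfl⟩, Or.inl ⟨ha, hai, rfl, hx'⟩⟩,
                valid_zero S hS x', lc_refl hS x'⟩
          · exact ⟨Sum.inl (x', 0), Or.inl ⟨hsp, Or.inl ⟨hval, ha, rfl, x, hdelx, hx'⟩⟩,
              valid_zero S hS x', lc_refl hS x'⟩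
        · rintro a ⟨ha, hna⟩
          exact absurd ha hna
        · rintro a ⟨ha, -⟩ (⟨q', e'⟩ | p') hact
          · rcases hact with ⟨-, hact⟩ | ⟨⟨rfl, rfl⟩, ⟨hain, -⟩ | h3⟩
            · obtain ⟨rfl, hrest⟩ := impAct_notout hS ha hact
              exact ⟨q', R0_output (hS := hS) hdelx ⟨rfl, hrest⟩, valid_zero S hS q', lc_refl hS q'⟩
            · exact (hio hain ha).elim
            · obtain ⟨rfl, hrest⟩ := h3
              exact ⟨q', R0_output (hS := hS) hdelx ⟨rfl, hrest⟩, valid_zero S hS q', lc_refl hS q'⟩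
          · obtain ⟨-, -, rfl, hiin, -⟩ := hact
            exact (hio hiin ha).elim
        · rintro a ⟨ha, hna⟩
          exact absurd ha hna
        · rintro δ (⟨q', e'⟩ | p') hdel
          · obtain ⟨rfl, rfl, hv', y, hxy, hqy⟩ := R0_delay hval hdelx hdel
            exact ⟨y, hxy, hv', hqy⟩
          · exact hdel.elim
      | out o =>
        obtain ⟨hval, hdelx⟩ := hR0
        refine ⟨?_, ?_, ?_, ?_, ?_⟩
        · rintro a ⟨ha, -⟩ x' hx'
          by_cases hsp : q = s ∧ e = 0
          · obtain ⟨rfl, rfl⟩ := hsp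
            have hxq : x = q := lc_ddet hS q 0 x q hdelx (lc_refl hS q)
            subst hxq
            exact ⟨Sum.inl (x', 0), Or.inr ⟨⟨rfl, rfl⟩, ha, rfl, hx'⟩,
              valid_zero S hS x', lc_refl hS x'⟩
          · exact ⟨Sum.inl (x', 0), Or.inl ⟨hsp, Or.inl ⟨hval, ha, rfl, x, hdelx, hx'⟩⟩,
              valid_zero S hS x', lc_refl hS x'⟩
        · rintro a ⟨ha, hna⟩
          exact absurd ha hna
        · rintro a ⟨ha, -⟩ (⟨q', e'⟩ | p') hact
          · rcases hact with ⟨-, hact⟩ | ⟨-, hain, -⟩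
            · obtain ⟨rfl, hrest⟩ := impAct_notout hS ha hact
              exact ⟨q', R0_output (hS := hS) hdelx ⟨rfl, hrest⟩, valid_zero S hS q', lc_refl hS q'⟩
            · exact (hio hain ha).elim
          · obtain ⟨rfl, rfl, rfl, -, rfl⟩ := hact
            have hxq : x = q := lc_ddet hS q 0 x q hdelx (lc_refl hS q)
            subst hxq
            exact ⟨s', hlink.2.1, hlink.2.2⟩
        · rintro a ⟨ha, hna⟩
          exact absurd ha hna
        · rintro δ (⟨q', e'⟩ | p') hdel
          · rcases hdel with ⟨-, hdel⟩ | ⟨⟨rfl, rfl⟩, rfl, rfl, rfl⟩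
            · obtain ⟨rfl, rfl, hv', y, hxy, hqy⟩ := R0_delay hval hdelx hdel
              exact ⟨y, hxy, hv', hqy⟩
            · exact ⟨x, lc_refl hS x, hval, hdelx⟩
          · exact hdel.elim
      | del dd =>
        refine ⟨?_, ?_, ?_, ?_, ?_⟩
        · rintro a ⟨ha, -⟩ x' hx'
          rcases hR0 with ⟨rfl, helt, hdelx⟩ | ⟨hqs, hval, hdelx⟩
          · refine ⟨Sum.inl (x', 0), Or.inr ⟨rfl, Or.inl ⟨helt, ha, rfl, x, hdelx, hx'⟩⟩, ?_⟩
            by_cases hx's : x' = q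
            · subst hx's
              exact Or.inl ⟨rfl, hlink.1, lc_refl hS _⟩
            · exact Or.inr ⟨hx's, valid_zero S hS x', lc_refl hS x'⟩
          · refine ⟨Sum.inl (x', 0), Or.inl ⟨hqs, Or.inl ⟨hval, ha, rfl, x, hdelx, hx'⟩⟩, ?_⟩
            by_cases hx's : x' = s
            · subst hx's
              exact Or.inl ⟨rfl, hlink.1, lc_refl hS _⟩
            · exact Or.inr ⟨hx's, valid_zero S hS x', lc_refl hS x'⟩
        · rintro a ⟨ha, hna⟩
          exact absurd ha hna
        · rintro a ⟨ha, -⟩ (⟨q', e'⟩ | p') hact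
          · rcases hR0 with ⟨rfl, helt, hdelx⟩ | ⟨hqs, hval, hdelx⟩
            · rcases hact with ⟨hne, -⟩ | ⟨-, ⟨-, hain, -⟩ | ⟨-, hain, -⟩⟩
              · exact absurd rfl hne
              · exact (hio hain ha).elim
              · exact (hio hain ha).elim
            · rcases hact with ⟨-, hact⟩ | ⟨hq, -⟩
              · obtain ⟨rfl, hrest⟩ := impAct_notout hS ha hact
                refine ⟨q', R0_output (hS := hS) hdelx ⟨rfl, hrest⟩, ?_⟩
                by_cases hq's : q' = s
                · subst hq's
                  exact Or.inl ⟨rfl, hlink.1, lc_refl hS _⟩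
                · exact Or.inr ⟨hq's, valid_zero S hS q', lc_refl hS q'⟩
              · exact absurd hq hqs
          · exact hact.elim
        · rintro a ⟨ha, hna⟩
          exact absurd ha hna
        · rintro δ (⟨q', e'⟩ | p') hdel
          · rcases hR0 with ⟨rfl, helt, hdelx⟩ | ⟨hqs, hval, hdelx⟩
            · rcases hdel with ⟨hne, -⟩ | ⟨-, rfl, ⟨-, hlt, rfl⟩ | ⟨hne, -⟩⟩
              · exact absurd rfl hne
              · obtain ⟨y, hy⟩ := delay_of_le hS hlink.2.1 hlt.le
                exact ⟨y, delay_split hS hdelx hy, Or.inl ⟨rfl, hlt, hy⟩⟩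
              · exact absurd helt hne
            · rcases hdel with ⟨-, hdel⟩ | ⟨hq, -⟩
              · obtain ⟨rfl, rfl, hv', y, hxy, hqy⟩ := R0_delay hval hdelx hdel
                exact ⟨y, hxy, Or.inr ⟨hqs, hv', hqy⟩⟩
              · exact absurd hq hqs
          · obtain ⟨rfl, helt2, hcross, hPd⟩ := hdel
            rcases hR0 with ⟨-, helt, hdelx⟩ | ⟨hqs, -, -⟩
            · obtain ⟨y', hy', hRy'⟩ := (hRp P.init s' hlink.2.2).2.2 (e + δ - dd) p' hPd
              have hy2 : S.delayTrans q (dd + (e + δ - dd)) y' :=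
                (lc_add hS q y' dd (e + δ - dd)).2 ⟨s', hlink.2.1, hy'⟩
              rw [add_tsub_cancel_of_le hcross] at hy2
              exact ⟨y', delay_split hS hdelx hy2, hRy'⟩
            · exact absurd rfl hqs
    · -- state of the P part
      obtain ⟨hc1, hc3, hc5⟩ := hRp p x hR0
      refine ⟨?_, ?_, ?_, ?_, ?_⟩
      · rintro a ⟨ha, -⟩ x' hx'
        obtain ⟨p', hp', hR'⟩ := hc1 a ha x' hx'
        exact ⟨Sum.inr p', hp', hR'⟩
      · rintro a ⟨ha, hna⟩
        exact absurd ha hna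
      · rintro a ⟨ha, -⟩ (⟨q', e'⟩ | p') hact
        · exact hact.elim
        · obtain ⟨x', hx', hR'⟩ := hc3 a ha p' hact
          exact ⟨x', hx', hR'⟩
      · rintro a ⟨ha, hna⟩
        exact absurd ha hna
      · rintro δ (⟨q', e'⟩ | p') hdel
        · exact hdel.elim
        · obtain ⟨x', hx', hR'⟩ := hc5 δ p' hdel
          exact ⟨x', hx', hR'⟩

end TIOTS

namespace TIOTS

variable {Act Q1 Q2 QP : Type}

lemma graft_mod {S : TIOTS Act Q1} (hS : S.LocallyConsistent) {s s' : Q1} (mv : Move Act)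
    {P : TIOTS Act QP} (hPim : P.IsImplementation) (hPin : P.inputs = S.inputs)
    (hPout : P.outputs = S.outputs) (Rp : QP → Q1 → Prop)
    (hRp : ∀ p x, Rp p x →
      (∀ a ∈ S.inputs, ∀ x', S.actTrans x a x' → ∃ p', P.actTrans p a p' ∧ Rp p' x') ∧
      (∀ a ∈ S.outputs, ∀ p', P.actTrans p a p' → ∃ x', S.actTrans x a x' ∧ Rp p' x') ∧
      (∀ (d : ℝ≥0) (p' : QP), P.delayTrans p d p' → ∃ x', S.delayTrans x d x' ∧ Rp p' x'))
    (hlink : match mv with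
      | .pure => True
      | .inp i => i ∈ S.inputs ∧ S.actTrans s i s' ∧ Rp P.init s'
      | .out o => o ∈ S.outputs ∧ S.actTrans s o s' ∧ Rp P.init s'
      | .del dd => 0 < dd ∧ S.delayTrans s dd s' ∧ Rp P.init s') :
    TIOTS.Mod (S.withInit s) (S.graft hS s mv P) := by
  refine ⟨graft_impl hS s mv P hPim hPin hPout ?_, rfl, rfl,
    graft_refines hS (s' := s') mv Rp hPin hPout hRp hlink⟩
  cases mv with
  | pure => trivial
  | inp i => trivial
  | out o => exact hlink.1
  | del dd => exact ⟨s', hlink.2.1⟩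

lemma canon_mod {S : TIOTS Act Q1} (hS : S.LocallyConsistent) (q : Q1) :
    TIOTS.Mod (S.withInit q) (S.graft hS q .pure (unitM S)) :=
  graft_mod hS (s' := q) .pure (unitM_impl hS) rfl rfl (fun _ _ => False)
    (fun _ _ h => h.elim) trivial

/-- restriction of a refinement relation of a grafted machine to the `P`-part -/
lemma graft_restrict {S : TIOTS Act Q1} {hS : S.LocallyConsistent} {s : Q1} {mv : Move Act}
    {P : TIOTS Act QP} {T : TIOTS Act Q2} {t t' : Q2}
    (hT : T.LocallyConsistent) (hin : S.inputs = T.inputs) (hout : S.outputs = T.outputs)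
    (hPim : P.IsImplementation) (hPin : P.inputs = S.inputs) (hPout : P.outputs = S.outputs)
    (RT : ((Q1 × ℝ≥0) ⊕ QP) → Q2 → Prop)
    (hRT : ∀ w u, RT w u →
      (∀ a ∈ (T.withInit t).inputs ∩ (S.graft hS s mv P).inputs, ∀ u',
        (T.withInit t).actTrans u a u' →
        ∃ w', (S.graft hS s mv P).actTrans w a w' ∧ RT w' u') ∧
      (∀ a ∈ (T.withInit t).inputs \ (S.graft hS s mv P).inputs, ∀ u',
        (T.withInit t).actTrans u a u' → RT w u') ∧
      (∀ a ∈ (S.graft hS s mv P).outputs ∩ (T.withInit t).outputs, ∀ w',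
        (S.graft hS s mv P).actTrans w a w' →
        ∃ u', (T.withInit t).actTrans u a u' ∧ RT w' u') ∧
      (∀ a ∈ (S.graft hS s mv P).outputs \ (T.withInit t).outputs, ∀ w',
        (S.graft hS s mv P).actTrans w a w' → RT w' u) ∧
      (∀ (d : ℝ≥0) (w' : (Q1 × ℝ≥0) ⊕ QP), (S.graft hS s mv P).delayTrans w d w' →
        ∃ u', (T.withInit t).delayTrans u d u' ∧ RT w' u'))
    (hanch : RT (Sum.inr P.init) t') :
    TIOTS.Mod (T.withInit t') P := by
  refine ⟨hPim, hPin.trans hin, hPout.trans hout, ?_, ?_, ?_, ?_,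
    fun p u => RT (Sum.inr p) u, hanch, ?_⟩
  · rw [hPin, hin]; exact hT.1.1.1
  · rw [hPout, hout]; exact (hT.1.1.1).symm
  · rw [hPin, hin]; exact subset_rfl
  · rw [hPout, hout]; exact subset_rfl
  · intro p u hpu
    obtain ⟨c1, c2, c3, c4, c5⟩ := hRT (Sum.inr p) u hpu
    refine ⟨?_, ?_, ?_, ?_, ?_⟩
    · rintro i ⟨hiT, hiP⟩ u' hu'
      obtain ⟨w', hw', hR'⟩ := c1 i ⟨hiT, (hPin ▸ hiP : i ∈ S.inputs)⟩ u' hu'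
      rcases w' with z | p'
      · exact hw'.elim
      · exact ⟨p', hw', hR'⟩
    · rintro i ⟨hiT, hiP⟩ u' hu'
      refine absurd ?_ hiP
      rw [hPin, hin]
      exact hiT
    · rintro o ⟨hoP, hoT⟩ p' hp'
      obtain ⟨u', hu', hR'⟩ := c3 o ⟨(hPout ▸ hoP : o ∈ S.outputs), hoT⟩ (Sum.inr p') hp'
      exact ⟨u', hu', hR'⟩
    · rintro o ⟨hoP, hoT⟩ p' hp'
      exact absurd (show o ∈ T.outputs by rw [← hout, ← hPout]; exact hoP) hoT
    · intro d p' hp'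
      obtain ⟨u', hu', hR'⟩ := c5 d (Sum.inr p') hp'
      exact ⟨u', hu', hR'⟩

/-- core step of the completeness proof -/
lemma step_core {S : TIOTS Act Q1} {T : TIOTS Act Q2}
    (hS : S.LocallyConsistent) (hT : T.LocallyConsistent)
    (hin : S.inputs = T.inputs) (hout : S.outputs = T.outputs)
    {a : Q1} {b : Q2}
    (hR : ∀ (QP : Type) (P : TIOTS Act QP),
      TIOTS.Mod (S.withInit a) P → TIOTS.Mod (T.withInit b) P)
    (mv : Move Act) {s' : Q1}
    (hlink : match mv with
      | .pure => False
      | .inp i => i ∈ S.inputs ∧ S.actTrans a i s'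
      | .out o => o ∈ S.outputs ∧ S.actTrans a o s'
      | .del dd => 0 < dd ∧ S.delayTrans a dd s') :
    ∀ (QP : Type) (P : TIOTS Act QP), TIOTS.Mod (S.withInit s') P →
      ∃ t', (match mv with
        | .pure => False
        | .inp i => T.actTrans b i t'
        | .out o => T.actTrans b o t'
        | .del dd => T.delayTrans b dd t') ∧ TIOTS.Mod (T.withInit t') P := by
  intro QP P hP
  obtain ⟨hPim, hPin, hPout, hPref⟩ := hP
  obtain ⟨-, -, -, -, Rp, hRpi, hRpc⟩ := hPref
  have hRp' : ∀ p x, Rp p x →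
      (∀ c ∈ S.inputs, ∀ x', S.actTrans x c x' → ∃ p', P.actTrans p c p' ∧ Rp p' x') ∧
      (∀ c ∈ S.outputs, ∀ p', P.actTrans p c p' → ∃ x', S.actTrans x c x' ∧ Rp p' x') ∧
      (∀ (d : ℝ≥0) (p' : QP), P.delayTrans p d p' → ∃ x', S.delayTrans x d x' ∧ Rp p' x') := by
    intro p x h
    obtain ⟨c1, -, c3, -, c5⟩ := hRpc p x h
    refine ⟨?_, ?_, ?_⟩
    · intro c hc x' hx'
      exact c1 c ⟨hc, (hPin.symm ▸ hc : c ∈ P.inputs)⟩ x' hx'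
    · intro c hc p' hp'
      exact c3 c ⟨(hPout.symm ▸ hc : c ∈ P.outputs), hc⟩ p' hp'
    · exact fun d p' hp' => c5 d p' hp'
  cases mv with
  | pure => exact hlink.elim
  | inp i =>
    obtain ⟨hi, hactSi⟩ := hlink
    have hMod : TIOTS.Mod (S.withInit a) (S.graft hS a (.inp i) P) :=
      graft_mod hS (s' := s') (.inp i) hPim hPin hPout Rp hRp' ⟨hi, hactSi, hRpi⟩
    obtain ⟨-, -, -, hGref⟩ := hR _ _ hMod
    obtain ⟨-, -, -, -, RT, hRTi, hRTc⟩ := hGref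
    obtain ⟨e1, -, -, -, -⟩ := hRTc _ _ hRTi
    obtain ⟨t', htact⟩ := lc_ie hT b i (hin ▸ hi)
    obtain ⟨w', hw', hRT'⟩ := e1 i ⟨(hin ▸ hi : i ∈ T.inputs), hi⟩ t' htact
    have hw : w' = Sum.inr P.init := by
      rcases w' with ⟨q0, e0⟩ | p0
      · rcases hw' with ⟨hns, -⟩ | ⟨-, ⟨-, hne, -⟩ | ⟨-, hb, -, hlab, -⟩⟩
        · exact absurd ⟨rfl, rfl⟩ hns
        · exact absurd rfl hne
        · exact (Set.disjoint_left.mp (lc_disj hS) hi (hlab ▸ sch_out S hS hb)).elim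
      · obtain ⟨-, -, -, -, rfl⟩ := hw'
        rfl
    subst hw
    exact ⟨t', htact, graft_restrict hT hin hout hPim hPin hPout RT hRTc hRT'⟩
  | out o =>
    obtain ⟨ho, hactSo⟩ := hlink
    have hMod : TIOTS.Mod (S.withInit a) (S.graft hS a (.out o) P) :=
      graft_mod hS (s' := s') (.out o) hPim hPin hPout Rp hRp' ⟨ho, hactSo, hRpi⟩
    obtain ⟨-, -, -, hGref⟩ := hR _ _ hMod
    obtain ⟨-, -, -, -, RT, hRTi, hRTc⟩ := hGref
    obtain ⟨-, -, e3, -, -⟩ := hRTc _ _ hRTi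
    have hGact : (S.graft hS a (.out o) P).actTrans (Sum.inl (a, 0)) o (Sum.inr P.init) :=
      ⟨rfl, rfl, rfl, ho, rfl⟩
    obtain ⟨t', htact, hRT'⟩ := e3 o ⟨ho, (hout ▸ ho : o ∈ T.outputs)⟩ (Sum.inr P.init) hGact
    exact ⟨t', htact, graft_restrict hT hin hout hPim hPin hPout RT hRTc hRT'⟩
  | del dd =>
    obtain ⟨hdpos, hdelS⟩ := hlink
    have hMod : TIOTS.Mod (S.withInit a) (S.graft hS a (.del dd) P) :=
      graft_mod hS (s' := s') (.del dd) hPim hPin hPout Rp hRp' ⟨hdpos, hdelS, hRpi⟩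
    obtain ⟨-, -, -, hGref⟩ := hR _ _ hMod
    obtain ⟨-, -, -, -, RT, hRTi, hRTc⟩ := hGref
    obtain ⟨-, -, -, -, e5⟩ := hRTc _ _ hRTi
    have h0 : (0 : ℝ≥0) + dd - dd = 0 := by rw [zero_add, tsub_self]
    have hGdel : (S.graft hS a (.del dd) P).delayTrans (Sum.inl (a, 0)) dd (Sum.inr P.init) := by
      refine ⟨rfl, hdpos, by rw [zero_add], ?_⟩
      rw [h0]
      exact hPim.1.1.2.2.2.2.1 P.init
    obtain ⟨t', htdel, hRT'⟩ := e5 dd (Sum.inr P.init) hGdel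
    exact ⟨t', htdel, graft_restrict hT hin hout hPim hPin hPout RT hRTc hRT'⟩

/-- Backward direction: implementation-set inclusion implies refinement. -/
lemma refines_of_mod {S : TIOTS Act Q1} {T : TIOTS Act Q2}
    (hS : S.LocallyConsistent) (hT : T.LocallyConsistent)
    (hin : S.inputs = T.inputs) (hout : S.outputs = T.outputs)
    (H : ∀ (QP : Type) (P : TIOTS Act QP), TIOTS.Mod S P → TIOTS.Mod T P) :
    S.Refines T := by
  refine ⟨by rw [← hout]; exact lc_disj hS, by rw [← hin]; exact (lc_disj hS).symm,
    hin.subset, hout.symm.subset,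
    fun a b => ∀ (QP : Type) (P : TIOTS Act QP),
      TIOTS.Mod (S.withInit a) P → TIOTS.Mod (T.withInit b) P, ?_, ?_⟩
  · intro QP P hP
    rw [withInit_self] at hP
    rw [withInit_self]
    exact H QP P hP
  · intro a b hR
    refine ⟨?_, ?_, ?_, ?_, ?_⟩
    · rintro i ⟨hiT, hiS⟩ t' ht'
      obtain ⟨s', hs'⟩ := lc_ie hS a i hiS
      refine ⟨s', hs', ?_⟩
      intro QP P hP
      obtain ⟨t'', htact, hModP⟩ := step_core hS hT hin hout hR (.inp i) ⟨hiS, hs'⟩ QP P hP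
      rwa [lc_adet hT b i t' t'' ht' htact]
    · rintro i ⟨hiT, hiS⟩ t' ht'
      exact absurd (hin.symm ▸ hiT : i ∈ S.inputs) hiS
    · rintro o ⟨hoS, hoT⟩ s'' hs''
      obtain ⟨t', htact, -⟩ := step_core hS hT hin hout hR (.out o) ⟨hoS, hs''⟩ _ _
        (canon_mod hS s'')
      refine ⟨t', htact, ?_⟩
      intro QP P hP
      obtain ⟨t'', htact', hModP⟩ := step_core hS hT hin hout hR (.out o) ⟨hoS, hs''⟩ QP P hP
      rwa [lc_adet hT b o t' t'' htact htact']
    · rintro o ⟨hoS, hoT⟩ s'' hs''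
      exact absurd (hout ▸ hoS : o ∈ T.outputs) hoT
    · intro d s'' hdel
      by_cases hd0 : d = 0
      · subst hd0
        have hs'' : s'' = a := lc_ddet hS a 0 s'' a hdel (lc_refl hS a)
        subst hs''
        exact ⟨b, lc_refl hT b, hR⟩
      · have hdpos : 0 < d := pos_iff_ne_zero.mpr hd0
        obtain ⟨t', htdel, -⟩ := step_core hS hT hin hout hR (.del d) ⟨hdpos, hdel⟩ _ _
          (canon_mod hS s'')
        refine ⟨t', htdel, ?_⟩
        intro QP P hP
        obtain ⟨t'', htdel', hModP⟩ := step_core hS hT hin hout hR (.del d) ⟨hdpos, hdel⟩ QP P hP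
        rwa [lc_ddet hT b d t' t'' htdel htdel']

end TIOTS


/-- Completeness of refinement with respect to
implementation-set inclusion. -/
theorem refines_iff_mod_subset {Act Q1 Q2 : Type}
    (S : TIOTS Act Q1) (T : TIOTS Act Q2)
    (hS : S.LocallyConsistent) (hT : T.LocallyConsistent)
    (hin : S.inputs = T.inputs) (hout : S.outputs = T.outputs) :
    S.Refines T ↔
      ∀ (QP : Type) (P : TIOTS Act QP), TIOTS.Mod S P → TIOTS.Mod T P := by
  constructor
  · exact TIOTS.mod_of_refines hT hin hout
  · exact TIOTS.refines_of_mod hS hT hin hout
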